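/- arXiv:1804.00279 — 8 statements merged into one kernel-verified Lean document; each statement's English description precedes it below -/
import Mathlib

section
/- Let P ⊴ G be a normal subgroup with N ≤ P, and let D₀, D₁ ⊆ G each be a union of left cosets of P. Then ⋃{R_a : a ∈ G⧸N, ⟨a⟩ ⊆ D₀} = ⋃{R_a : a ∈ G⧸N, ⟨a⟩ ⊆ D₁} if and only if D₀ = D₁. In particular, distinct sets of the atomic relations R_a have distinct unions. -/
open scoped Pointwise

namespace CosetRA

variable {G G' : Type*}

/-- The coset of `a : G ⧸ N` as a subset of `G`: `⟨a⟩ = {g : G | [g]_N = a}`. -/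
def cosetOf [Group G] (N : Subgroup G) (a : G ⧸ N) : Set G :=
  {g : G | (g : G ⧸ N) = a}

/-- Forward image `φ[S]` of a subset `S ⊆ G` under a quotient isomorphism. -/
def fwd [Group G] [Group G'] (N : Subgroup G) (M : Subgroup G')
    [N.Normal] [M.Normal] (φ : G ⧸ N ≃* G' ⧸ M) (S : Set G) : Set G' :=
  {h : G' | ∃ g ∈ S, φ (g : G ⧸ N) = (h : G' ⧸ M)}

/-- Inverse image `φ⁻¹[S']` of a subset `S' ⊆ G'` under a quotient isomorphism. -/
def bwd [Group G] [Group G'] (N : Subgroup G) (M : Subgroup G')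
    [N.Normal] [M.Normal] (φ : G ⧸ N ≃* G' ⧸ M) (S' : Set G') : Set G :=
  {g : G | ∃ h ∈ S', φ (g : G ⧸ N) = (h : G' ⧸ M)}

/-- The atomic relation `R_a = {(g,h) : [h]_M = φ([g]_N)·φ(a)}`. -/
def atom [Group G] [Group G'] (N : Subgroup G) (M : Subgroup G')
    [N.Normal] [M.Normal] (φ : G ⧸ N ≃* G' ⧸ M) (a : G ⧸ N) : Set (G × G') :=
  {p : G × G' | (p.2 : G' ⧸ M) = φ (p.1 : G ⧸ N) * φ a}

/-- Converse of a relation: `R˘ = {(v,u) : (u,v) ∈ R}`. -/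
def conv {α β : Type*} (R : Set (α × β)) : Set (β × α) := {p | (p.2, p.1) ∈ R}

/-- Relational composition `R ∘ S`. -/
def rcomp {α β γ : Type*} (R : Set (α × β)) (S : Set (β × γ)) : Set (α × γ) :=
  {p | ∃ v, (p.1, v) ∈ R ∧ (v, p.2) ∈ S}

/-- `C` is a left coset of the set `P`. -/
def IsLeftCosetSet [Group G] (P C : Set G) : Prop := ∃ g : G, C = g • P

/-- `Q` is a union of left cosets of the set `P`. -/
def IsUnionOfCosets [Group G] (P Q : Set G) : Prop := ∀ g ∈ Q, g • P ⊆ Q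

/-- The union of all atomic relations `R_c` with `⟨c⟩ ⊆ K`. -/
def unionAtoms [Group G] [Group G'] (N : Subgroup G) (M : Subgroup G')
    [N.Normal] [M.Normal] (φ : G ⧸ N ≃* G' ⧸ M) (K : Set G) : Set (G × G') :=
  ⋃ c ∈ {c : G ⧸ N | cosetOf N c ⊆ K}, atom N M φ c

lemma subset_of_union_subset {G G' : Type*} [Group G] [Group G']
    (N : Subgroup G) (M : Subgroup G') [N.Normal] [M.Normal]
    (φ : G ⧸ N ≃* G' ⧸ M)
    (P : Subgroup G) (hNP : N ≤ P) (D₀ D₁ : Set G)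
    (h₀ : IsUnionOfCosets (P : Set G) D₀)
    (h : (⋃ a ∈ {a : G ⧸ N | cosetOf N a ⊆ D₀}, atom N M φ a) ⊆
      (⋃ a ∈ {a : G ⧸ N | cosetOf N a ⊆ D₁}, atom N M φ a)) : D₀ ⊆ D₁ := by
  intro g hg
  have hsub : cosetOf N (g : G ⧸ N) ⊆ D₀ := by
    intro x hx
    have hx' : (x : G ⧸ N) = (g : G ⧸ N) := hx
    have hmem : g⁻¹ * x ∈ N := by
      rwa [eq_comm, QuotientGroup.eq] at hx'
    have : x ∈ g • (P : Set G) := ⟨g⁻¹ * x, hNP hmem, by simp [smul_eq_mul]⟩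
    exact h₀ g hg this
  obtain ⟨h', hh'⟩ := QuotientGroup.mk_surjective (φ (g : G ⧸ N))
  have hmem : ((1 : G), h') ∈ ⋃ a ∈ {a : G ⧸ N | cosetOf N a ⊆ D₀}, atom N M φ a := by
    refine Set.mem_biUnion hsub ?_
    show (h' : G' ⧸ M) = φ ((1 : G) : G ⧸ N) * φ (g : G ⧸ N)
    simp [hh']
  obtain ⟨c, hc, hcm⟩ := Set.mem_iUnion₂.mp (h hmem)
  have hcm' : (h' : G' ⧸ M) = φ ((1 : G) : G ⧸ N) * φ c := hcm
  have : φ c = φ (g : G ⧸ N) := by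
    simp only [QuotientGroup.mk_one, map_one, one_mul] at hcm'
    rw [← hcm', hh']
  have hceq : c = (g : G ⧸ N) := φ.injective this
  exact hc (by rw [hceq]; rfl)

/-- Distinct unions of cosets of a normal subgroup `P ⊇ N` determine distinct
unions of the corresponding atomic relations. -/
theorem distinct_unions_of_atoms {G G' : Type*} [Group G] [Group G']
    (N : Subgroup G) (M : Subgroup G') [N.Normal] [M.Normal]
    (φ : G ⧸ N ≃* G' ⧸ M)
    (P : Subgroup G) [P.Normal] (hNP : N ≤ P) (D₀ D₁ : Set G)
    (h₀ : IsUnionOfCosets (P : Set G) D₀) (h₁ : IsUnionOfCosets (P : Set G) D₁) :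
    (⋃ a ∈ {a : G ⧸ N | cosetOf N a ⊆ D₀}, atom N M φ a) =
      (⋃ a ∈ {a : G ⧸ N | cosetOf N a ⊆ D₁}, atom N M φ a) ↔ D₀ = D₁ := by
  constructor
  · intro h
    exact Set.Subset.antisymm
      (subset_of_union_subset N M φ P hNP D₀ D₁ h₀ h.le)
      (subset_of_union_subset N M φ P hNP D₁ D₀ h₁ h.ge)
  · rintro rfl; rfl

end CosetRA
end

section
/- The following are equivalent: (i) the identity relation {(g,g) : g ∈ G} equals ⋃_{a∈S} R_a for some set S ⊆ G⧸N; (ii) R_1 equals the identity relation on G, where 1 is the identity element of G⧸N; (iii) N and M are both the trivial subgroup and φ([g]_N) = [g]_M for every g ∈ G (i.e. φ is the identity automorphism of G modulo the trivial subgroup). (Identity Theorem.) -/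
open scoped Pointwise

namespace CosetRA

variable {G G' : Type*}

/-- **Identity Theorem.** The identity relation is a union of atoms iff `R_1` is
the identity relation, iff `N` and `M` are trivial and `φ` is the identity. -/
theorem identity_theorem {G : Type*} [Group G]
    (N M : Subgroup G) [N.Normal] [M.Normal] (φ : G ⧸ N ≃* G ⧸ M) :
    ((∃ S : Set (G ⧸ N), {p : G × G | p.1 = p.2} = ⋃ a ∈ S, atom N M φ a) ↔
      atom N M φ 1 = {p : G × G | p.1 = p.2}) ∧
    (atom N M φ 1 = {p : G × G | p.1 = p.2} ↔
      (N = ⊥ ∧ M = ⊥ ∧ ∀ g : G, φ (g : G ⧸ N) = (g : G ⧸ M))) := by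
  constructor
  · constructor
    · rintro ⟨S, hS⟩
      have hmem : ∀ a ∈ S, a = 1 := by
        intro a ha
        obtain ⟨h, hh⟩ := QuotientGroup.mk_surjective (s := M) (φ a)
        have h1 : ((1 : G), h) ∈ atom N M φ a := by
          simp [atom, hh]
        have : ((1 : G), h) ∈ {p : G × G | p.1 = p.2} := by
          rw [hS]
          exact Set.mem_biUnion ha h1
        have hh1 : h = 1 := this.symm
        apply φ.injective
        rw [map_one]
        rw [hh1] at hh
        simpa using hh.symm
      have h1S : (1 : G ⧸ N) ∈ S := by
        have : ((1 : G), (1 : G)) ∈ ⋃ a ∈ S, atom N M φ a := by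
          rw [← hS]; rfl
        obtain ⟨a, ha, hmem'⟩ := Set.mem_iUnion₂.mp this
        exact hmem a ha ▸ ha
      have hSeq : S = {1} := by
        ext a
        simp only [Set.mem_singleton_iff]
        exact ⟨fun h => hmem a h, fun h => h ▸ h1S⟩
      rw [hSeq] at hS
      simpa using hS.symm
    · intro h
      exact ⟨{1}, by simpa using h.symm⟩
  · constructor
    · intro h
      have hdiag : ∀ g : G, φ (g : G ⧸ N) = (g : G ⧸ M) := by
        intro g
        have : (g, g) ∈ atom N M φ 1 := by rw [h]; rfl
        simpa [atom] using this.symm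
      refine ⟨?_, ?_, hdiag⟩
      · rw [Subgroup.eq_bot_iff_forall]
        intro n hn
        have hmemn : (n, (1 : G)) ∈ atom N M φ 1 := by
          simp [atom, (QuotientGroup.eq_one_iff n).mpr hn]
        rw [h] at hmemn
        exact hmemn
      · rw [Subgroup.eq_bot_iff_forall]
        intro m hm
        have hmemm : ((1 : G), m) ∈ atom N M φ 1 := by
          simp [atom, (QuotientGroup.eq_one_iff m).mpr hm]
        rw [h] at hmemm
        exact hmemm.symm
    · rintro ⟨hN, hM, hφ⟩
      ext ⟨g, h⟩
      simp only [atom, Set.mem_setOf_eq, map_one, mul_one, hφ]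
      rw [QuotientGroup.eq]
      subst hM
      simp only [Subgroup.mem_bot]
      constructor
      · intro hx
        exact (eq_of_inv_mul_eq_one hx).symm
      · rintro rfl; simp

end CosetRA
end

section
/- The following are equivalent: (i) there exist a ∈ G⧸N and b ∈ G′⧸M with (R_a)˘ = S_b; (ii) for every a ∈ G⧸N there exists b ∈ G′⧸M with (R_a)˘ = S_b; (iii) ψ = φ⁻¹, that is, ψ(u) = φ⁻¹(u) for every u ∈ G′⧸M. Moreover, when these conditions hold, the element b in (ii) is uniquely determined by a, namely b = φ(a⁻¹). (Converse Theorem.) -/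
open scoped Pointwise

namespace CosetRA

variable {G G' : Type*}

lemma key_lemma {G G' : Type*} [Group G] [Group G']
    (N : Subgroup G) (M : Subgroup G') [N.Normal] [M.Normal]
    (φ : G ⧸ N ≃* G' ⧸ M) (ψ : G' ⧸ M ≃* G ⧸ N) (a : G ⧸ N) (b : G' ⧸ M) :
    conv (atom N M φ a) = atom M N ψ b ↔
      ∀ (u : G ⧸ N) (v : G' ⧸ M), (v = φ u * φ a ↔ u = ψ v * ψ b) := by
  rw [Set.ext_iff]
  constructor
  · intro h u v
    obtain ⟨g, rfl⟩ := QuotientGroup.mk_surjective u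
    obtain ⟨h', rfl⟩ := QuotientGroup.mk_surjective v
    exact h (h', g)
  · intro h p
    exact h p.2 p.1

/-- **Converse Theorem.** Some converse of an atom is an atom of the reversed
system iff every one is, iff `ψ = φ⁻¹`; and then `b` is uniquely `φ(a⁻¹)`. -/
theorem converse_theorem {G G' : Type*} [Group G] [Group G']
    (N : Subgroup G) (M : Subgroup G') [N.Normal] [M.Normal]
    (φ : G ⧸ N ≃* G' ⧸ M) (ψ : G' ⧸ M ≃* G ⧸ N) :
    (((∃ a : G ⧸ N, ∃ b : G' ⧸ M, conv (atom N M φ a) = atom M N ψ b) ↔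
        (∀ a : G ⧸ N, ∃ b : G' ⧸ M, conv (atom N M φ a) = atom M N ψ b)) ∧
      ((∀ a : G ⧸ N, ∃ b : G' ⧸ M, conv (atom N M φ a) = atom M N ψ b) ↔
        (∀ u : G' ⧸ M, ψ u = φ.symm u))) ∧
    ((∀ u : G' ⧸ M, ψ u = φ.symm u) →
      ∀ (a : G ⧸ N) (b : G' ⧸ M), conv (atom N M φ a) = atom M N ψ b → b = φ a⁻¹) := by
  have himp : (∀ u : G' ⧸ M, ψ u = φ.symm u) →
      ∀ a : G ⧸ N, conv (atom N M φ a) = atom M N ψ (φ a⁻¹) := by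
    intro hψ a
    rw [key_lemma]
    intro u v
    rw [hψ v, hψ (φ a⁻¹), φ.symm_apply_apply]
    constructor
    · rintro rfl
      simp [map_mul, mul_assoc]
    · rintro rfl
      simp [map_mul, mul_assoc]
  have hrev : (∃ a : G ⧸ N, ∃ b : G' ⧸ M, conv (atom N M φ a) = atom M N ψ b) →
      ∀ u : G' ⧸ M, ψ u = φ.symm u := by
    rintro ⟨a, b, hab⟩
    rw [key_lemma] at hab
    have h1 : ∀ u : G ⧸ N, u = ψ (φ u * φ a) * ψ b := fun u => (hab u _).mp rfl
    have h2 : (1 : G ⧸ N) = ψ (φ a) * ψ b := by simpa using h1 1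
    have h3 : ∀ u : G ⧸ N, ψ (φ u) = u := by
      intro u
      have := h1 u
      rw [map_mul, mul_assoc, ← h2, mul_one] at this
      exact this.symm
    intro u
    have := h3 (φ.symm u)
    rwa [φ.apply_symm_apply] at this
  refine ⟨⟨⟨fun h => ?_, fun h => ?_⟩, ⟨fun h => hrev ⟨1, h 1⟩, fun h a => ⟨φ a⁻¹, himp h a⟩⟩⟩, ?_⟩
  · exact fun a => ⟨φ a⁻¹, himp (hrev h) a⟩
  · exact ⟨1, h 1⟩
  · intro hψ a b hab
    rw [key_lemma] at hab
    have := (hab 1 (φ a)).mp (by simp)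
    rw [hψ (φ a), hψ b, φ.symm_apply_apply] at this
    have hb : φ.symm b = a⁻¹ := (inv_eq_of_mul_eq_one_right this.symm).symm
    rw [← hb, φ.apply_symm_apply]

end CosetRA
end

section
/- The following are equivalent: (i) there is a set S ⊆ G₁⧸N₃ with R¹_1 ∘ R²_1 = ⋃_{c∈S} R³_c (where 1 denotes the identity of the respective quotient group); (ii) for all a ∈ G₁⧸N₁ and b ∈ G₂⧸N₂ there is a set S ⊆ G₁⧸N₃ with R¹_a ∘ R²_b = ⋃_{c∈S} R³_c; (iii) for all a ∈ G₁⧸N₁ and b ∈ G₂⧸N₂, R¹_a ∘ R²_b = ⋃{R³_c : c ∈ G₁⧸N₃, ⟨c⟩ ⊆ φ₁⁻¹[⟨φ₁(a)⟩·⟨b⟩]}; (iv) (N₃ as a subset of G₁) ⊆ φ₁⁻¹[M₁·N₂], and for all g ∈ G₁, h ∈ G₂ and k, k′ ∈ G₃ with φ₁([g]_{N₁}) = [h]_{M₁}, φ₂([h]_{N₂}) = [k]_{M₂} and φ₃([g]_{N₃}) = [k′]_{M₃}, one has k⁻¹·k′ ∈ φ₂[M₁·N₂] (this last condition expresses that the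 maps induced by φ₁, φ₂, φ₃ on the quotients modulo φ₁⁻¹[M₁·N₂], M₁·N₂ and φ₂[M₁·N₂] satisfy: φ₁-induced followed by φ₂-induced equals φ₃-induced). (Composition Theorem.) -/
open scoped Pointwise

namespace CosetRA

variable {G G' : Type*}

/-- **Composition Theorem.** -/
theorem composition_theorem {G₁ G₂ G₃ : Type*} [Group G₁] [Group G₂] [Group G₃]
    (N₁ : Subgroup G₁) (M₁ : Subgroup G₂) (N₂ : Subgroup G₂) (M₂ : Subgroup G₃)
    (N₃ : Subgroup G₁) (M₃ : Subgroup G₃)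
    [N₁.Normal] [M₁.Normal] [N₂.Normal] [M₂.Normal] [N₃.Normal] [M₃.Normal]
    (φ₁ : G₁ ⧸ N₁ ≃* G₂ ⧸ M₁) (φ₂ : G₂ ⧸ N₂ ≃* G₃ ⧸ M₂) (φ₃ : G₁ ⧸ N₃ ≃* G₃ ⧸ M₃) :
    List.TFAE
      [ (∃ S : Set (G₁ ⧸ N₃),
          rcomp (atom N₁ M₁ φ₁ 1) (atom N₂ M₂ φ₂ 1) = ⋃ c ∈ S, atom N₃ M₃ φ₃ c),
        (∀ (a : G₁ ⧸ N₁) (b : G₂ ⧸ N₂), ∃ S : Set (G₁ ⧸ N₃),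
          rcomp (atom N₁ M₁ φ₁ a) (atom N₂ M₂ φ₂ b) = ⋃ c ∈ S, atom N₃ M₃ φ₃ c),
        (∀ (a : G₁ ⧸ N₁) (b : G₂ ⧸ N₂),
          rcomp (atom N₁ M₁ φ₁ a) (atom N₂ M₂ φ₂ b) =
            ⋃ c ∈ {c : G₁ ⧸ N₃ |
                cosetOf N₃ c ⊆ bwd N₁ M₁ φ₁ (cosetOf M₁ (φ₁ a) * cosetOf N₂ b)},
              atom N₃ M₃ φ₃ c),
        ((N₃ : Set G₁) ⊆ bwd N₁ M₁ φ₁ ((M₁ : Set G₂) * (N₂ : Set G₂)) ∧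
          ∀ (g : G₁) (h : G₂) (k k' : G₃),
            φ₁ (g : G₁ ⧸ N₁) = (h : G₂ ⧸ M₁) → φ₂ (h : G₂ ⧸ N₂) = (k : G₃ ⧸ M₂) →
            φ₃ (g : G₁ ⧸ N₃) = (k' : G₃ ⧸ M₃) →
            k⁻¹ * k' ∈ fwd N₂ M₂ φ₂ ((M₁ : Set G₂) * (N₂ : Set G₂))) ] := by
  have hPsub : ((M₁ : Set G₂) * (N₂ : Set G₂)) = ((M₁ ⊔ N₂ : Subgroup G₂) : Set G₂) :=
    (Subgroup.mul_normal M₁ N₂).symm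
  tfae_have 2 → 1 := fun h => h 1 1
  tfae_have 3 → 2 := fun h a b => ⟨_, h a b⟩
  tfae_have 1 → 4 := by
    rintro ⟨S, hS⟩
    have h1S : (1 : G₁ ⧸ N₃) ∈ S := by
      have h11 : ((1 : G₁), (1 : G₃)) ∈ rcomp (atom N₁ M₁ φ₁ 1) (atom N₂ M₂ φ₂ 1) :=
        ⟨1, by simp [atom], by simp [atom]⟩
      rw [hS] at h11
      obtain ⟨c, hcS, hc⟩ := Set.mem_iUnion₂.mp h11
      have hc1 : φ₃ c = 1 := by simpa [atom] using hc.symm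
      have : c = 1 := by
        apply φ₃.injective; simpa using hc1
      rwa [this] at hcS
    constructor
    · intro n hn
      have hmem : ((n : G₁), (1 : G₃)) ∈ ⋃ c ∈ S, atom N₃ M₃ φ₃ c := by
        refine Set.mem_iUnion₂.mpr ⟨1, h1S, ?_⟩
        show ((1 : G₃) : G₃ ⧸ M₃) = φ₃ ((n : G₁) : G₁ ⧸ N₃) * φ₃ 1
        simp [(QuotientGroup.eq_one_iff (n : G₁)).mpr hn]
      rw [← hS] at hmem
      obtain ⟨h, hh1, hh2⟩ := hmem
      have hh1' : ((h : G₂) : G₂ ⧸ M₁) = φ₁ ((n : G₁) : G₁ ⧸ N₁) := by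
        simpa [atom] using hh1
      have hh2' : φ₂ ((h : G₂) : G₂ ⧸ N₂) = 1 := by
        have : ((1 : G₃) : G₃ ⧸ M₂) = φ₂ ((h : G₂) : G₂ ⧸ N₂) * φ₂ 1 := hh2
        simpa using this.symm
      have hhN₂ : h ∈ N₂ := by
        rw [← QuotientGroup.eq_one_iff]
        apply φ₂.injective; simpa using hh2'
      have hhP : h ∈ (M₁ : Set G₂) * (N₂ : Set G₂) := by
        rw [hPsub]; exact Subgroup.mem_sup_right hhN₂
      exact ⟨h, hhP, hh1'.symm⟩
    · intro g h k k' hgh hhk hgk'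
      have hmem : (g, k') ∈ rcomp (atom N₁ M₁ φ₁ 1) (atom N₂ M₂ φ₂ 1) := by
        rw [hS]
        refine Set.mem_iUnion₂.mpr ⟨1, h1S, ?_⟩
        show ((k' : G₃) : G₃ ⧸ M₃) = φ₃ ((g : G₁) : G₁ ⧸ N₃) * φ₃ 1
        simp [hgk']
      obtain ⟨h₂, hh₂1, hh₂2⟩ := hmem
      have hh₂1' : ((h₂ : G₂) : G₂ ⧸ M₁) = ((h : G₂) : G₂ ⧸ M₁) := by
        have : ((h₂ : G₂) : G₂ ⧸ M₁) = φ₁ ((g : G₁) : G₁ ⧸ N₁) * φ₁ 1 := hh₂1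
        rw [hgh] at this; simpa using this
      have hh₂2' : φ₂ ((h₂ : G₂) : G₂ ⧸ N₂) = ((k' : G₃) : G₃ ⧸ M₂) := by
        have : ((k' : G₃) : G₃ ⧸ M₂) = φ₂ ((h₂ : G₂) : G₂ ⧸ N₂) * φ₂ 1 := hh₂2
        simpa using this.symm
      have hmM : h⁻¹ * h₂ ∈ M₁ := QuotientGroup.eq.mp hh₂1'.symm
      refine ⟨h⁻¹ * h₂, ?_, ?_⟩
      · rw [hPsub]; exact Subgroup.mem_sup_left hmM
      · show φ₂ (((h⁻¹ * h₂ : G₂)) : G₂ ⧸ N₂) = ((k⁻¹ * k' : G₃) : G₃ ⧸ M₂)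
        rw [QuotientGroup.mk_mul, QuotientGroup.mk_mul, QuotientGroup.mk_inv,
          QuotientGroup.mk_inv, map_mul, map_inv, hhk, hh₂2']
  tfae_have 4 → 3 := by
    rintro ⟨-, hb⟩ a b
    obtain ⟨α, rfl⟩ := QuotientGroup.mk_surjective a
    obtain ⟨β, rfl⟩ := QuotientGroup.mk_surjective b
    ext ⟨g, k⟩
    constructor
    · rintro ⟨h, hh1, hk1⟩
      have hh1' : ((h : G₂) : G₂ ⧸ M₁) = φ₁ ((g : G₁) : G₁ ⧸ N₁) * φ₁ ((α : G₁) : G₁ ⧸ N₁) :=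
        hh1
      have hk1' : ((k : G₃) : G₃ ⧸ M₂) = φ₂ ((h : G₂) : G₂ ⧸ N₂) * φ₂ ((β : G₂) : G₂ ⧸ N₂) :=
        hk1
      refine Set.mem_iUnion₂.mpr
        ⟨φ₃.symm ((φ₃ ((g : G₁) : G₁ ⧸ N₃))⁻¹ * ((k : G₃) : G₃ ⧸ M₃)), ?_, ?_⟩
      · intro x hx
        have hx' : φ₃ ((x : G₁) : G₁ ⧸ N₃) =
            (φ₃ ((g : G₁) : G₁ ⧸ N₃))⁻¹ * ((k : G₃) : G₃ ⧸ M₃) := by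
          have := congrArg φ₃ (show ((x : G₁) : G₁ ⧸ N₃) =
            φ₃.symm ((φ₃ ((g : G₁) : G₁ ⧸ N₃))⁻¹ * ((k : G₃) : G₃ ⧸ M₃)) from hx)
          rwa [φ₃.apply_symm_apply] at this
        have hx3 : φ₃ (((g * x : G₁)) : G₁ ⧸ N₃) = ((k : G₃) : G₃ ⧸ M₃) := by
          rw [QuotientGroup.mk_mul, map_mul, hx', mul_inv_cancel_left]
        obtain ⟨h₂, hh₂⟩ := QuotientGroup.mk_surjective (φ₁ (((g * x : G₁)) : G₁ ⧸ N₁))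
        obtain ⟨k₂, hk₂⟩ := QuotientGroup.mk_surjective (φ₂ ((h₂ : G₂) : G₂ ⧸ N₂))
        obtain ⟨q, hqP, hq⟩ := hb (g * x) h₂ k₂ k hh₂.symm hk₂.symm hx3
        have key : φ₂ (((h₂ * q : G₂)) : G₂ ⧸ N₂) = φ₂ (((h * β : G₂)) : G₂ ⧸ N₂) := by
          rw [QuotientGroup.mk_mul, QuotientGroup.mk_mul, map_mul, map_mul, hq, ← hk₂,
            ← hk1']
          rw [QuotientGroup.mk_mul, QuotientGroup.mk_inv, mul_inv_cancel_left]
        have hnN : (h * β)⁻¹ * (h₂ * q) ∈ N₂ :=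
          QuotientGroup.eq.mp (φ₂.injective key).symm
        set n : G₂ := (h * β)⁻¹ * (h₂ * q) with hn_def
        have hh₂eq : h₂ = h * β * n * q⁻¹ := by rw [hn_def]; group
        have hnq : n * q⁻¹ ∈ (M₁ : Set G₂) * (N₂ : Set G₂) := by
          rw [hPsub] at hqP ⊢
          exact mul_mem (Subgroup.mem_sup_right hnN) (inv_mem hqP)
        obtain ⟨m', hm', n', hn', hmn⟩ := Set.mem_mul.mp hnq
        obtain ⟨u₀, hu₀⟩ := QuotientGroup.mk_surjective (φ₁ ((α : G₁) : G₁ ⧸ N₁))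
        have hy : (u₀ * (β * m' * β⁻¹)) * (β * n') = u₀ * h⁻¹ * h₂ := by
          rw [hh₂eq, show h * β * n * q⁻¹ = h * β * (n * q⁻¹) by group, ← hmn]; group
        refine ⟨(u₀ * (β * m' * β⁻¹)) * (β * n'), ?_, ?_⟩
        · refine Set.mul_mem_mul ?_ ?_
          · show (((u₀ * (β * m' * β⁻¹) : G₂)) : G₂ ⧸ M₁) = φ₁ ((α : G₁) : G₁ ⧸ N₁)
            rw [QuotientGroup.mk_mul, hu₀,
              (QuotientGroup.eq_one_iff _).mpr (Subgroup.Normal.conj_mem ‹M₁.Normal› m' hm' β),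
              mul_one]
          · show (((β * n' : G₂)) : G₂ ⧸ N₂) = ((β : G₂) : G₂ ⧸ N₂)
            rw [QuotientGroup.mk_mul, (QuotientGroup.eq_one_iff _).mpr hn', mul_one]
        · show φ₁ ((x : G₁) : G₁ ⧸ N₁) = _
          rw [hy, QuotientGroup.mk_mul, QuotientGroup.mk_mul, QuotientGroup.mk_inv, hu₀,
            hh₂, hh1', QuotientGroup.mk_mul, map_mul]
          group
      · show ((k : G₃) : G₃ ⧸ M₃) = φ₃ ((g : G₁) : G₁ ⧸ N₃) * φ₃ _
        rw [φ₃.apply_symm_apply, mul_inv_cancel_left]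
    · intro hmem
      obtain ⟨c, hc, hkc⟩ := Set.mem_iUnion₂.mp hmem
      obtain ⟨γ, rfl⟩ := QuotientGroup.mk_surjective c
      have hkc' : ((k : G₃) : G₃ ⧸ M₃) =
          φ₃ ((g : G₁) : G₁ ⧸ N₃) * φ₃ ((γ : G₁) : G₁ ⧸ N₃) := hkc
      obtain ⟨y, hy, hφγ⟩ := hc (show γ ∈ cosetOf N₃ ((γ : G₁) : G₁ ⧸ N₃) from rfl)
      obtain ⟨u, hu, v, hv, rfl⟩ := Set.mem_mul.mp hy
      have hu' : ((u : G₂) : G₂ ⧸ M₁) = φ₁ ((α : G₁) : G₁ ⧸ N₁) := hu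
      have hv' : ((v : G₂) : G₂ ⧸ N₂) = ((β : G₂) : G₂ ⧸ N₂) := hv
      have hvN : β⁻¹ * v ∈ N₂ := QuotientGroup.eq.mp hv'.symm
      have hk3 : φ₃ (((g * γ : G₁)) : G₁ ⧸ N₃) = ((k : G₃) : G₃ ⧸ M₃) := by
        rw [QuotientGroup.mk_mul, map_mul, ← hkc']
      obtain ⟨h₂, hh₂⟩ := QuotientGroup.mk_surjective (φ₁ (((g * γ : G₁)) : G₁ ⧸ N₁))
      obtain ⟨k₂, hk₂⟩ := QuotientGroup.mk_surjective (φ₂ ((h₂ : G₂) : G₂ ⧸ N₂))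
      obtain ⟨q, hqP, hq⟩ := hb (g * γ) h₂ k₂ k hh₂.symm hk₂.symm hk3
      obtain ⟨h₀, hh₀⟩ := QuotientGroup.mk_surjective
        (φ₁ ((g : G₁) : G₁ ⧸ N₁) * φ₁ ((α : G₁) : G₁ ⧸ N₁))
      have hh₂M : ((h₂ : G₂) : G₂ ⧸ M₁) = (((h₀ * v : G₂)) : G₂ ⧸ M₁) := by
        rw [hh₂, QuotientGroup.mk_mul, map_mul, hφγ, QuotientGroup.mk_mul, hu',
          QuotientGroup.mk_mul, ← mul_assoc, hh₀]
      have hm₀M : (h₀ * v)⁻¹ * h₂ ∈ M₁ := QuotientGroup.eq.mp hh₂M.symm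
      set m₀ : G₂ := (h₀ * v)⁻¹ * h₂ with hm₀_def
      have hh₂eq : h₂ = h₀ * v * m₀ := by rw [hm₀_def]; group
      have hrP : β⁻¹ * v * m₀ * q ∈ (M₁ : Set G₂) * (N₂ : Set G₂) := by
        rw [hPsub] at hqP ⊢
        exact mul_mem (mul_mem (Subgroup.mem_sup_right hvN) (Subgroup.mem_sup_left hm₀M)) hqP
      obtain ⟨m₁, hm₁, n₁, hn₁, hmn⟩ := Set.mem_mul.mp hrP
      have helt : h₂ * q = h₀ * β * (m₁ * n₁) := by
        rw [hmn, hh₂eq]; group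
      have hclass : (((h₀ * β * (m₁ * n₁) : G₂)) : G₂ ⧸ N₂) =
          (((h₀ * (β * m₁ * β⁻¹) * β : G₂)) : G₂ ⧸ N₂) := by
        apply QuotientGroup.eq.mpr
        have : (h₀ * β * (m₁ * n₁))⁻¹ * (h₀ * (β * m₁ * β⁻¹) * β) = n₁⁻¹ := by group
        rw [this]; exact N₂.inv_mem hn₁
      refine ⟨h₀ * (β * m₁ * β⁻¹), ?_, ?_⟩
      · show (((h₀ * (β * m₁ * β⁻¹) : G₂)) : G₂ ⧸ M₁) =
          φ₁ ((g : G₁) : G₁ ⧸ N₁) * φ₁ ((α : G₁) : G₁ ⧸ N₁)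
        rw [QuotientGroup.mk_mul,
          (QuotientGroup.eq_one_iff _).mpr (Subgroup.Normal.conj_mem ‹M₁.Normal› m₁ hm₁ β),
          mul_one, hh₀]
      · show ((k : G₃) : G₃ ⧸ M₂) =
          φ₂ (((h₀ * (β * m₁ * β⁻¹) : G₂)) : G₂ ⧸ N₂) * φ₂ ((β : G₂) : G₂ ⧸ N₂)
        calc ((k : G₃) : G₃ ⧸ M₂) = ((k₂ : G₃) : G₃ ⧸ M₂) * (((k₂⁻¹ * k : G₃)) : G₃ ⧸ M₂) := by
              rw [QuotientGroup.mk_mul, QuotientGroup.mk_inv, mul_inv_cancel_left]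
          _ = φ₂ ((h₂ : G₂) : G₂ ⧸ N₂) * φ₂ ((q : G₂) : G₂ ⧸ N₂) := by rw [hk₂, hq]
          _ = φ₂ (((h₂ * q : G₂)) : G₂ ⧸ N₂) := by rw [QuotientGroup.mk_mul, map_mul]
          _ = φ₂ (((h₀ * (β * m₁ * β⁻¹) * β : G₂)) : G₂ ⧸ N₂) := by rw [helt, hclass]
          _ = φ₂ (((h₀ * (β * m₁ * β⁻¹) : G₂)) : G₂ ⧸ N₂) * φ₂ ((β : G₂) : G₂ ⧸ N₂) := by
              rw [QuotientGroup.mk_mul, map_mul]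
  tfae_finish

end CosetRA
end

section
/- Let C ⊆ G be a left coset of N, and for a ∈ G⧸N define P_C(a) := ⋃{R_γ : γ ∈ G⧸N, ⟨γ⟩ ⊆ ⟨a⟩·C} (this is the coset-shifted relative product of R_a with the identity relation on G′). The following are equivalent: (i) P_C(a) = R_a for some a ∈ G⧸N; (ii) P_C(a) = R_a for every a ∈ G⧸N; (iii) C = N as subsets of G. (Identity Law Theorem: the shifted relative product with the identity relation is the identity operation exactly when the shifting coset is the identity coset.) -/
open scoped Pointwise

namespace CosetRA

variable {G G' : Type*}

lemma cosetOf_eq_smul [Group G] (N : Subgroup G) (g : G) :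
    cosetOf N (g : G ⧸ N) = g • (N : Set G) := by
  ext x
  simp only [cosetOf, Set.mem_setOf_eq, mem_leftCoset_iff, SetLike.mem_coe]
  rw [QuotientGroup.eq]
  constructor
  · intro h; simpa using N.inv_mem h
  · intro h; simpa using N.inv_mem h

lemma cosetOf_mul [Group G] (N : Subgroup G) [N.Normal] (a b : G ⧸ N) :
    cosetOf N a * cosetOf N b = cosetOf N (a * b) := by
  ext x
  constructor
  · rintro ⟨s, hs, t, ht, rfl⟩
    simp only [cosetOf, Set.mem_setOf_eq] at *
    rw [QuotientGroup.mk_mul, hs, ht]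
  · intro hx
    refine ⟨x * b.out⁻¹, ?_, b.out, ?_, by group⟩
    · simp only [cosetOf, Set.mem_setOf_eq] at *
      rw [QuotientGroup.mk_mul, hx, QuotientGroup.mk_inv, QuotientGroup.out_eq']
      group
    · exact QuotientGroup.out_eq' b

lemma cosetOf_subset_iff [Group G] (N : Subgroup G) (c b : G ⧸ N) :
    cosetOf N c ⊆ cosetOf N b ↔ c = b := by
  constructor
  · intro h
    have := h (show c.out ∈ cosetOf N c from QuotientGroup.out_eq' c)
    rw [← QuotientGroup.out_eq' c]; exact this
  · rintro rfl; rfl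

lemma unionAtoms_cosetOf [Group G] [Group G'] (N : Subgroup G) (M : Subgroup G')
    [N.Normal] [M.Normal] (φ : G ⧸ N ≃* G' ⧸ M) (b : G ⧸ N) :
    unionAtoms N M φ (cosetOf N b) = atom N M φ b := by
  unfold unionAtoms
  have : {c : G ⧸ N | cosetOf N c ⊆ cosetOf N b} = {b} := by
    ext c; simpa using cosetOf_subset_iff N c b
  rw [this]; simp

lemma atom_injective [Group G] [Group G'] (N : Subgroup G) (M : Subgroup G')
    [N.Normal] [M.Normal] (φ : G ⧸ N ≃* G' ⧸ M) {a b : G ⧸ N}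
    (h : atom N M φ a = atom N M φ b) : a = b := by
  have h1 : ((1 : G), (φ a).out) ∈ atom N M φ a := by
    simp [atom, QuotientGroup.out_eq']
  rw [h] at h1
  have h2 : φ a = φ b := by
    simpa [atom, QuotientGroup.out_eq'] using h1
  exact φ.injective h2

/-- **Identity Law Theorem.** The coset-shifted relative product with the
identity relation is the identity operation exactly when `C = N`. -/
theorem identity_law_theorem {G G' : Type*} [Group G] [Group G']
    (N : Subgroup G) (M : Subgroup G') [N.Normal] [M.Normal]
    (φ : G ⧸ N ≃* G' ⧸ M) (C : Set G) (hC : IsLeftCosetSet (N : Set G) C) :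
    List.TFAE
      [ (∃ a : G ⧸ N, unionAtoms N M φ (cosetOf N a * C) = atom N M φ a),
        (∀ a : G ⧸ N, unionAtoms N M φ (cosetOf N a * C) = atom N M φ a),
        C = (N : Set G) ] := by
  obtain ⟨g₀, rfl⟩ := hC
  have hC' : g₀ • (N : Set G) = cosetOf N (g₀ : G ⧸ N) := (cosetOf_eq_smul N g₀).symm
  have key : ∀ a : G ⧸ N,
      unionAtoms N M φ (cosetOf N a * g₀ • (N : Set G)) = atom N M φ (a * g₀) := by
    intro a
    rw [hC', cosetOf_mul, unionAtoms_cosetOf]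
  tfae_have 1 → 3
  · rintro ⟨a, ha⟩
    rw [key a] at ha
    have : a * (g₀ : G ⧸ N) = a := atom_injective N M φ ha
    have hg : (g₀ : G ⧸ N) = 1 := mul_eq_left.mp this
    have hg' : g₀ ∈ N := (QuotientGroup.eq_one_iff g₀).mp hg
    ext x
    simp only [mem_leftCoset_iff, SetLike.mem_coe]
    constructor
    · intro hx; simpa using N.mul_mem hg' hx
    · intro hx; exact N.mul_mem (N.inv_mem hg') hx
  tfae_have 3 → 2
  · intro h3 a
    rw [key a]
    have hg : (g₀ : G ⧸ N) = 1 := by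
      rw [QuotientGroup.eq_one_iff]
      have : g₀ ∈ g₀ • (N : Set G) := ⟨1, N.one_mem, mul_one g₀⟩
      rwa [h3] at this
    rw [hg, mul_one]
  tfae_have 2 → 1
  · intro h2; exact ⟨1, h2 1⟩
  tfae_finish

end CosetRA
end

section
/- Assume the pre-semi-frame conditions (SF3): φ₁[N₁·N₃] = M₁·N₂, φ₂[M₁·N₂] = M₃·M₂, and φ₃[N₁·N₃] = M₃·M₂. Let C ⊆ G₁ be a left coset of N₁·N₃. The following are equivalent: (i) for every Q ⊆ G₁ that is a union of left cosets of N₁·N₃, φ₂[φ₁[Q]] = φ₃[C⁻¹·Q·C]; (ii) for every Q ⊆ G₂ that is a union of left cosets of M₁·N₂, φ₃⁻¹[φ₂[Q]] = C⁻¹·φ₁⁻¹[Q]·C; (iii) for every Q ⊆ G₃ that is a union of left cosets of M₃·M₂, C·φ₃⁻¹[Q] = φ₁⁻¹[φ₂⁻¹[Q]]·C. -/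
open scoped Pointwise

namespace CosetRA

variable {G G' : Type*}

section Aux

variable [Group G] [Group G'] (N : Subgroup G) (M : Subgroup G') [N.Normal] [M.Normal]
  (φ : G ⧸ N ≃* G' ⧸ M)

theorem bwd_eq_fwd_symm (S : Set G') : bwd N M φ S = fwd M N φ.symm S := by
  ext g
  constructor
  · rintro ⟨h, hh, e⟩
    exact ⟨h, hh, by rw [← e, φ.symm_apply_apply]⟩
  · rintro ⟨h, hh, e⟩
    exact ⟨h, hh, by rw [← e, φ.apply_symm_apply]⟩

theorem fwd_eq_bwd_symm (S : Set G) : fwd N M φ S = bwd M N φ.symm S := by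
  rw [bwd_eq_fwd_symm, MulEquiv.symm_symm]

theorem fwd_bwd (S : Set G') (hS : ∀ h ∈ S, ∀ m ∈ M, h * m ∈ S) :
    fwd N M φ (bwd N M φ S) = S := by
  ext x
  constructor
  · rintro ⟨g, ⟨h, hh, e⟩, e2⟩
    have hm : h⁻¹ * x ∈ M := QuotientGroup.eq.mp (by rw [← e, e2])
    simpa using hS h hh _ hm
  · intro hx
    obtain ⟨g, hg⟩ := QuotientGroup.mk_surjective (φ.symm (x : G' ⧸ M))
    have hgx : φ (g : G ⧸ N) = (x : G' ⧸ M) := by rw [hg, φ.apply_symm_apply]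
    exact ⟨g, ⟨x, hx, hgx⟩, hgx⟩

theorem bwd_fwd (S : Set G) (hS : ∀ g ∈ S, ∀ n ∈ N, g * n ∈ S) :
    bwd N M φ (fwd N M φ S) = S := by
  rw [fwd_eq_bwd_symm, bwd_eq_fwd_symm]
  exact fwd_bwd M N φ.symm S hS

theorem fwd_uc (Pa : Set G) (Pb : Set G') (hP : Pb ⊆ fwd N M φ Pa) (Q : Set G)
    (hQ : ∀ q ∈ Q, ∀ p ∈ Pa, q * p ∈ Q) :
    ∀ h ∈ fwd N M φ Q, ∀ p ∈ Pb, h * p ∈ fwd N M φ Q := by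
  rintro h ⟨g, hg, e⟩ p' hp'
  obtain ⟨p, hp, ep⟩ := hP hp'
  refine ⟨g * p, hQ g hg p hp, ?_⟩
  rw [QuotientGroup.mk_mul, map_mul, e, ep, QuotientGroup.mk_mul]

theorem bwd_uc (Pa : Set G) (Pb : Set G') (hP : fwd N M φ Pa ⊆ Pb) (Q : Set G')
    (hQ : ∀ q ∈ Q, ∀ p ∈ Pb, q * p ∈ Q) :
    ∀ g ∈ bwd N M φ Q, ∀ p ∈ Pa, g * p ∈ bwd N M φ Q := by
  rintro g ⟨h, hh, e⟩ p hp
  obtain ⟨p', hp'⟩ := QuotientGroup.mk_surjective (φ (p : G ⧸ N))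
  have hp'' : p' ∈ Pb := hP ⟨p, hp, hp'.symm⟩
  refine ⟨h * p', hQ h hh p' hp'', ?_⟩
  rw [QuotientGroup.mk_mul, map_mul, e, ← hp', QuotientGroup.mk_mul]

end Aux

section SetAux

variable [Group G]

theorem isUnionOfCosets_iff (Pset Q : Set G) :
    IsUnionOfCosets Pset Q ↔ ∀ q ∈ Q, ∀ p ∈ Pset, q * p ∈ Q := by
  constructor
  · intro h q hq p hp
    exact h q hq ⟨p, hp, rfl⟩
  · rintro h g hg x ⟨p, hp, rfl⟩
    exact h g hg p hp

theorem uc_mul_right (A B Pset : Set G) (hB : ∀ b ∈ B, ∀ p ∈ Pset, b * p ∈ B) :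
    ∀ x ∈ A * B, ∀ p ∈ Pset, x * p ∈ A * B := by
  rintro x hx p hp
  obtain ⟨a, ha, b, hb, rfl⟩ := hx
  exact ⟨a, ha, b * p, hB b hb p hp, (mul_assoc a b p).symm⟩

theorem uc_mul_self (Pset Q : Set G) (h1 : (1 : G) ∈ Pset)
    (hQ : ∀ q ∈ Q, ∀ p ∈ Pset, q * p ∈ Q) : Q * Pset = Q := by
  apply Set.Subset.antisymm
  · rintro x ⟨q, hq, p, hp, rfl⟩
    exact hQ q hq p hp
  · intro q hq
    exact ⟨q, hq, 1, h1, mul_one q⟩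

variable (P : Subgroup G) [P.Normal] (g : G)

theorem normal_mul_uc (Q : Set G) (hQ : ∀ q ∈ Q, ∀ p ∈ (P : Set G), q * p ∈ Q) :
    (P : Set G) * Q = Q := by
  apply Set.Subset.antisymm
  · rintro x ⟨p, hp, q, hq, rfl⟩
    have h2 : q⁻¹ * p * q ∈ P := by
      simpa using Subgroup.Normal.conj_mem ‹P.Normal› p hp q⁻¹
    have h3 := hQ q hq _ h2
    have : q * (q⁻¹ * p * q) = p * q := by group
    rwa [this] at h3
  · intro q hq
    exact ⟨1, P.one_mem, q, hq, one_mul q⟩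

omit [P.Normal] in
theorem coset_uc : ∀ c ∈ g • (P : Set G), ∀ p ∈ (P : Set G), c * p ∈ g • (P : Set G) := by
  rintro c ⟨q, hq, rfl⟩ p hp
  refine ⟨q * p, P.mul_mem hq hp, ?_⟩
  simp [mul_assoc]

omit [P.Normal] in
theorem coset_inv_mul : (g • (P : Set G))⁻¹ * (g • (P : Set G)) = (P : Set G) := by
  apply Set.Subset.antisymm
  · rintro x ⟨a, ha, b, hb, rfl⟩
    rw [Set.mem_inv] at ha
    obtain ⟨p, hp, hpa⟩ := ha
    obtain ⟨q, hq, rfl⟩ := hb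
    simp only [smul_eq_mul] at hpa
    have ha' : (g * p)⁻¹ = a := by rw [hpa, inv_inv]
    subst ha'
    show (g * p)⁻¹ * (g * q) ∈ (P : Set G)
    have : (g * p)⁻¹ * (g * q) = p⁻¹ * q := by group
    rw [this]
    exact P.mul_mem (P.inv_mem hp) hq
  · intro x hx
    refine ⟨g⁻¹, ?_, g * x, ⟨x, hx, rfl⟩, inv_mul_cancel_left g x⟩
    rw [Set.mem_inv]
    exact ⟨1, P.one_mem, by simp⟩

theorem coset_mul_inv : (g • (P : Set G)) * (g • (P : Set G))⁻¹ = (P : Set G) := by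
  apply Set.Subset.antisymm
  · rintro x ⟨a, ha, b, hb, rfl⟩
    obtain ⟨p, hp, rfl⟩ := ha
    rw [Set.mem_inv] at hb
    obtain ⟨q, hq, hqb⟩ := hb
    simp only [smul_eq_mul] at hqb
    have hb' : (g * q)⁻¹ = b := by rw [hqb, inv_inv]
    subst hb'
    show (g * p) * (g * q)⁻¹ ∈ (P : Set G)
    have : (g * p) * (g * q)⁻¹ = g * (p * q⁻¹) * g⁻¹ := by group
    rw [this]
    exact Subgroup.Normal.conj_mem ‹P.Normal› _ (P.mul_mem hp (P.inv_mem hq)) g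
  · intro x hx
    have h1 : g⁻¹ * x * g ∈ P := by
      simpa using Subgroup.Normal.conj_mem ‹P.Normal› x hx g⁻¹
    refine ⟨g * (g⁻¹ * x * g), ⟨_, h1, rfl⟩, g⁻¹, ?_, by group⟩
    rw [Set.mem_inv]
    exact ⟨1, P.one_mem, by simp⟩

end SetAux


/-- The three formulations of semi-frame condition (iv) are equivalent. -/
theorem sfimage_lemma {G₁ G₂ G₃ : Type*} [Group G₁] [Group G₂] [Group G₃]
    (N₁ : Subgroup G₁) (M₁ : Subgroup G₂) (N₂ : Subgroup G₂) (M₂ : Subgroup G₃)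
    (N₃ : Subgroup G₁) (M₃ : Subgroup G₃)
    [N₁.Normal] [M₁.Normal] [N₂.Normal] [M₂.Normal] [N₃.Normal] [M₃.Normal]
    (φ₁ : G₁ ⧸ N₁ ≃* G₂ ⧸ M₁) (φ₂ : G₂ ⧸ N₂ ≃* G₃ ⧸ M₂) (φ₃ : G₁ ⧸ N₃ ≃* G₃ ⧸ M₃)
    (hSF3a : fwd N₁ M₁ φ₁ ((N₁ : Set G₁) * (N₃ : Set G₁)) = (M₁ : Set G₂) * (N₂ : Set G₂))
    (hSF3b : fwd N₂ M₂ φ₂ ((M₁ : Set G₂) * (N₂ : Set G₂)) = (M₃ : Set G₃) * (M₂ : Set G₃))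
    (hSF3c : fwd N₃ M₃ φ₃ ((N₁ : Set G₁) * (N₃ : Set G₁)) = (M₃ : Set G₃) * (M₂ : Set G₃))
    (C : Set G₁) (hC : IsLeftCosetSet ((N₁ : Set G₁) * (N₃ : Set G₁)) C) :
    List.TFAE
      [ (∀ Q : Set G₁, IsUnionOfCosets ((N₁ : Set G₁) * (N₃ : Set G₁)) Q →
          fwd N₂ M₂ φ₂ (fwd N₁ M₁ φ₁ Q) = fwd N₃ M₃ φ₃ (C⁻¹ * Q * C)),
        (∀ Q : Set G₂, IsUnionOfCosets ((M₁ : Set G₂) * (N₂ : Set G₂)) Q →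
          bwd N₃ M₃ φ₃ (fwd N₂ M₂ φ₂ Q) = C⁻¹ * bwd N₁ M₁ φ₁ Q * C),
        (∀ Q : Set G₃, IsUnionOfCosets ((M₃ : Set G₃) * (M₂ : Set G₃)) Q →
          C * bwd N₃ M₃ φ₃ Q = bwd N₁ M₁ φ₁ (bwd N₂ M₂ φ₂ Q) * C) ] := by
  rw [← Subgroup.mul_normal N₁ N₃, ← Subgroup.mul_normal M₁ N₂] at hSF3a
  rw [← Subgroup.mul_normal M₁ N₂, ← Subgroup.mul_normal M₃ M₂] at hSF3b
  rw [← Subgroup.mul_normal N₁ N₃, ← Subgroup.mul_normal M₃ M₂] at hSF3c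
  rw [← Subgroup.mul_normal N₁ N₃] at hC
  rw [← Subgroup.mul_normal N₁ N₃, ← Subgroup.mul_normal M₁ N₂, ← Subgroup.mul_normal M₃ M₂]
  obtain ⟨g, rfl⟩ := hC
  tfae_have 1 → 2 := by
    intro h1 Q hQuc
    rw [isUnionOfCosets_iff] at hQuc
    set Q' := bwd N₁ M₁ φ₁ Q with hQ'def
    have hQ'uc : ∀ q ∈ Q', ∀ p ∈ ((N₁ ⊔ N₃ : Subgroup G₁) : Set G₁), q * p ∈ Q' :=
      bwd_uc N₁ M₁ φ₁ _ _ hSF3a.le Q hQuc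
    have hFQ' : fwd N₁ M₁ φ₁ Q' = Q :=
      fwd_bwd N₁ M₁ φ₁ Q (fun h hh m hm => hQuc h hh m ((le_sup_left : M₁ ≤ M₁ ⊔ N₂) hm))
    have h1Q := h1 Q' ((isUnionOfCosets_iff _ _).mpr hQ'uc)
    rw [hFQ'] at h1Q
    rw [h1Q]
    exact bwd_fwd N₃ M₃ φ₃ _
      (fun x hx n hn => uc_mul_right _ _ _ (coset_uc (N₁ ⊔ N₃) g) x hx n
        ((le_sup_right : N₃ ≤ N₁ ⊔ N₃) hn))
  tfae_have 2 → 3 := by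
    intro h2 Q hQuc
    rw [isUnionOfCosets_iff] at hQuc
    set Q₂ := bwd N₂ M₂ φ₂ Q with hQ₂def
    have hQ₂uc : ∀ q ∈ Q₂, ∀ p ∈ ((M₁ ⊔ N₂ : Subgroup G₂) : Set G₂), q * p ∈ Q₂ :=
      bwd_uc N₂ M₂ φ₂ _ _ hSF3b.le Q hQuc
    have hFQ₂ : fwd N₂ M₂ φ₂ Q₂ = Q :=
      fwd_bwd N₂ M₂ φ₂ Q (fun h hh m hm => hQuc h hh m ((le_sup_right : M₂ ≤ M₃ ⊔ M₂) hm))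
    have h2Q := h2 Q₂ ((isUnionOfCosets_iff _ _).mpr hQ₂uc)
    rw [hFQ₂] at h2Q
    rw [h2Q]
    set X := bwd N₁ M₁ φ₁ Q₂ with hXdef
    have hXuc : ∀ q ∈ X, ∀ p ∈ ((N₁ ⊔ N₃ : Subgroup G₁) : Set G₁), q * p ∈ X :=
      bwd_uc N₁ M₁ φ₁ _ _ hSF3a.le Q₂ hQ₂uc
    rw [← mul_assoc, ← mul_assoc, coset_mul_inv, normal_mul_uc (N₁ ⊔ N₃) X hXuc]
  tfae_have 3 → 1 := by
    intro h3 Q hQuc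
    rw [isUnionOfCosets_iff] at hQuc
    have hCQCuc : ∀ q ∈ (g • ((N₁ ⊔ N₃ : Subgroup G₁) : Set G₁))⁻¹ * Q *
        (g • ((N₁ ⊔ N₃ : Subgroup G₁) : Set G₁)),
        ∀ p ∈ ((N₁ ⊔ N₃ : Subgroup G₁) : Set G₁), q * p ∈
          (g • ((N₁ ⊔ N₃ : Subgroup G₁) : Set G₁))⁻¹ * Q *
          (g • ((N₁ ⊔ N₃ : Subgroup G₁) : Set G₁)) :=
      uc_mul_right _ _ _ (coset_uc (N₁ ⊔ N₃) g)
    set Q₃ := fwd N₃ M₃ φ₃ ((g • ((N₁ ⊔ N₃ : Subgroup G₁) : Set G₁))⁻¹ * Q *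
      (g • ((N₁ ⊔ N₃ : Subgroup G₁) : Set G₁))) with hQ₃def
    have hQ₃uc : ∀ q ∈ Q₃, ∀ p ∈ ((M₃ ⊔ M₂ : Subgroup G₃) : Set G₃), q * p ∈ Q₃ :=
      fwd_uc N₃ M₃ φ₃ _ _ hSF3c.ge _ hCQCuc
    have hB₃ : bwd N₃ M₃ φ₃ Q₃ = (g • ((N₁ ⊔ N₃ : Subgroup G₁) : Set G₁))⁻¹ * Q *
        (g • ((N₁ ⊔ N₃ : Subgroup G₁) : Set G₁)) :=
      bwd_fwd N₃ M₃ φ₃ _ (fun x hx n hn => hCQCuc x hx n ((le_sup_right : N₃ ≤ N₁ ⊔ N₃) hn))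
    have h := h3 Q₃ ((isUnionOfCosets_iff _ _).mpr hQ₃uc)
    rw [hB₃] at h
    set Y := bwd N₁ M₁ φ₁ (bwd N₂ M₂ φ₂ Q₃) with hYdef
    have hB₂uc : ∀ q ∈ bwd N₂ M₂ φ₂ Q₃, ∀ p ∈ ((M₁ ⊔ N₂ : Subgroup G₂) : Set G₂),
        q * p ∈ bwd N₂ M₂ φ₂ Q₃ :=
      bwd_uc N₂ M₂ φ₂ _ _ hSF3b.le Q₃ hQ₃uc
    have hYuc : ∀ q ∈ Y, ∀ p ∈ ((N₁ ⊔ N₃ : Subgroup G₁) : Set G₁), q * p ∈ Y :=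
      bwd_uc N₁ M₁ φ₁ _ _ hSF3a.le _ hB₂uc
    rw [← mul_assoc, ← mul_assoc, coset_mul_inv, normal_mul_uc (N₁ ⊔ N₃) Q hQuc] at h
    have hQY : Q = Y := by
      have e1 : Q * (g • ((N₁ ⊔ N₃ : Subgroup G₁) : Set G₁)) *
          (g • ((N₁ ⊔ N₃ : Subgroup G₁) : Set G₁))⁻¹ = Q := by
        rw [mul_assoc, coset_mul_inv, uc_mul_self _ Q (N₁ ⊔ N₃).one_mem hQuc]
      have e2 : Y * (g • ((N₁ ⊔ N₃ : Subgroup G₁) : Set G₁)) *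
          (g • ((N₁ ⊔ N₃ : Subgroup G₁) : Set G₁))⁻¹ = Y := by
        rw [mul_assoc, coset_mul_inv, uc_mul_self _ Y (N₁ ⊔ N₃).one_mem hYuc]
      rw [← e1, h, e2]
    have hf1 : fwd N₁ M₁ φ₁ Y = bwd N₂ M₂ φ₂ Q₃ :=
      fwd_bwd N₁ M₁ φ₁ _ (fun x hx m hm => hB₂uc x hx m ((le_sup_left : M₁ ≤ M₁ ⊔ N₂) hm))
    have hf2 : fwd N₂ M₂ φ₂ (bwd N₂ M₂ φ₂ Q₃) = Q₃ :=
      fwd_bwd N₂ M₂ φ₂ _ (fun x hx m hm => hQ₃uc x hx m ((le_sup_right : M₂ ≤ M₃ ⊔ M₂) hm))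
    rw [hQY, hf1, hf2]
  tfae_finish

end CosetRA
end

section
/- Assume the pre-semi-frame conditions (SF3): φ₁[N₁·N₃] = M₁·N₂, φ₂[M₁·N₂] = M₃·M₂, and φ₃[N₁·N₃] = M₃·M₂. Let C ⊆ G₁ be a left coset of N₁·N₃ and C″ ⊆ G₃ a left coset of M₂·M₃, and define, for u ∈ G₃⧸M₂ and v ∈ G₂⧸M₁, the reversed product R̃²_u ⊗_{C″} R̃¹_v := ⋃{R̃³_w : w ∈ G₃⧸M₃, ⟨w⟩ ⊆ φ₂[⟨φ₂⁻¹(u)⟩·⟨v⟩]·C″}. If the second involution law holds for all atoms, i.e. (R¹_a ⊗_C R²_b)˘ = R̃²_{φ₂(b⁻¹)} ⊗_{C″} R̃¹_{φ₁(a⁻¹)} for all a ∈ G₁⧸N₁ and b ∈ G₂⧸N₂, then the semi-frame condition (SF4) holds: for every Q ⊆ G₁ that is a union of left cosets of N₁·N₃, φ₂[φ₁[Q]] = φ₃[C⁻¹·Q·C]. (Semi-frame Corollary.) -/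
open scoped Pointwise

namespace CosetRA

variable {G G' : Type*}

/-- **Semi-frame Corollary** (second involution law case): if the second
involution law holds for all atoms, then semi-frame condition (iv) holds. -/
theorem semiframe_corollary {G₁ G₂ G₃ : Type*} [Group G₁] [Group G₂] [Group G₃]
    (N₁ : Subgroup G₁) (M₁ : Subgroup G₂) (N₂ : Subgroup G₂) (M₂ : Subgroup G₃)
    (N₃ : Subgroup G₁) (M₃ : Subgroup G₃)
    [N₁.Normal] [M₁.Normal] [N₂.Normal] [M₂.Normal] [N₃.Normal] [M₃.Normal]
    (φ₁ : G₁ ⧸ N₁ ≃* G₂ ⧸ M₁) (φ₂ : G₂ ⧸ N₂ ≃* G₃ ⧸ M₂) (φ₃ : G₁ ⧸ N₃ ≃* G₃ ⧸ M₃)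
    (hSF3a : fwd N₁ M₁ φ₁ ((N₁ : Set G₁) * (N₃ : Set G₁)) = (M₁ : Set G₂) * (N₂ : Set G₂))
    (hSF3b : fwd N₂ M₂ φ₂ ((M₁ : Set G₂) * (N₂ : Set G₂)) = (M₃ : Set G₃) * (M₂ : Set G₃))
    (hSF3c : fwd N₃ M₃ φ₃ ((N₁ : Set G₁) * (N₃ : Set G₁)) = (M₃ : Set G₃) * (M₂ : Set G₃))
    (C : Set G₁) (hC : IsLeftCosetSet ((N₁ : Set G₁) * (N₃ : Set G₁)) C)
    (C'' : Set G₃) (hC'' : IsLeftCosetSet ((M₂ : Set G₃) * (M₃ : Set G₃)) C'')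
    (hInv : ∀ (a : G₁ ⧸ N₁) (b : G₂ ⧸ N₂),
      conv (unionAtoms N₃ M₃ φ₃
          (bwd N₁ M₁ φ₁ (cosetOf M₁ (φ₁ a) * cosetOf N₂ b) * C)) =
        unionAtoms M₃ N₃ φ₃.symm
          (fwd N₂ M₂ φ₂
            (cosetOf N₂ (φ₂.symm (φ₂ b⁻¹)) * cosetOf M₁ (φ₁ a⁻¹)) * C'')) :
    ∀ Q : Set G₁, IsUnionOfCosets ((N₁ : Set G₁) * (N₃ : Set G₁)) Q →
      fwd N₂ M₂ φ₂ (fwd N₁ M₁ φ₁ Q) = fwd N₃ M₃ φ₃ (C⁻¹ * Q * C) := by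
  intro Q hQ
  obtain ⟨g₀, hC⟩ := hC
  obtain ⟨k₀, hC''⟩ := hC''
  have hP1 : ((N₁ ⊔ N₃ : Subgroup G₁) : Set G₁) = (N₁ : Set G₁) * (N₃ : Set G₁) :=
    Subgroup.mul_normal N₁ N₃
  have hP3 : ((M₃ ⊔ M₂ : Subgroup G₃) : Set G₃) = (M₃ : Set G₃) * (M₂ : Set G₃) :=
    Subgroup.mul_normal M₃ M₂
  have hP3' : ((M₃ ⊔ M₂ : Subgroup G₃) : Set G₃) = (M₂ : Set G₃) * (M₃ : Set G₃) := by
    rw [sup_comm]; exact Subgroup.mul_normal M₂ M₃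
  -- Key consequence of the involution law
  have key : ∀ (g : G₁) (h : G₂) (k₁ k₂' : G₃), φ₁ ↑g = ↑h → φ₂ ↑h = ↑k₁ →
      φ₃ ↑(g * g₀) = ↑k₂' → k₁⁻¹ * k₀ * k₂' ∈ M₃ ⊔ M₂ := by
    intro g h k₁ k₂' hgh hhk hk₂'
    have H := hInv (↑g) 1
    have mem1 : (k₂', (1 : G₁)) ∈ conv (unionAtoms N₃ M₃ φ₃
        (bwd N₁ M₁ φ₁ (cosetOf M₁ (φ₁ ↑g) * cosetOf N₂ 1) * C)) := by
      show ((1 : G₁), k₂') ∈ unionAtoms N₃ M₃ φ₃ _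
      simp only [unionAtoms, Set.mem_iUnion, Set.mem_setOf_eq, atom, exists_prop]
      refine ⟨((g * g₀ : G₁) : G₁ ⧸ N₃), ?_, ?_⟩
      · intro x hx
        have hx' : (g * g₀)⁻¹ * x ∈ N₃ := QuotientGroup.eq.mp hx.symm
        refine ⟨g, ⟨h, ⟨h, hgh.symm, 1, ?_, mul_one h⟩, hgh⟩,
          g₀ * ((g * g₀)⁻¹ * x), ?_, by group⟩
        · show ((1 : G₂) : G₂ ⧸ N₂) = 1
          simp
        · rw [hC]
          exact ⟨(g * g₀)⁻¹ * x, ⟨1, N₁.one_mem, _, hx', one_mul _⟩, rfl⟩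
      · show ((k₂' : G₃ ⧸ M₃)) = φ₃ ↑(1 : G₁) * φ₃ ↑(g * g₀)
        have h1 : ((1 : G₁) : G₁ ⧸ N₃) = 1 := rfl
        rw [h1, map_one, one_mul, hk₂']
    rw [H] at mem1
    simp only [unionAtoms, Set.mem_iUnion, Set.mem_setOf_eq, atom, exists_prop] at mem1
    obtain ⟨w, hw_sub, hw_atom⟩ := mem1
    have h0 : (1 : G₁ ⧸ N₃) = φ₃.symm ↑k₂' * φ₃.symm w := by simpa using hw_atom
    have hw' : w = ((k₂' : G₃ ⧸ M₃))⁻¹ := by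
      apply φ₃.symm.injective
      rw [map_inv]
      exact (mul_eq_one_iff_inv_eq.mp h0.symm).symm
    have hmemK2 : k₂'⁻¹ ∈ fwd N₂ M₂ φ₂
        (cosetOf N₂ (φ₂.symm (φ₂ (1 : G₂ ⧸ N₂)⁻¹)) * cosetOf M₁ (φ₁ ((g : G₁ ⧸ N₁))⁻¹)) * C'' := by
      apply hw_sub
      show ((k₂'⁻¹ : G₃) : G₃ ⧸ M₃) = w
      rw [hw', QuotientGroup.mk_inv]
    obtain ⟨t, ⟨s, hs, hφs⟩, c'', hc'', heq⟩ := hmemK2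
    obtain ⟨s₁, hs₁, s₂, hs₂, rfl⟩ := hs
    have hs₁' : s₁ ∈ N₂ := by
      have h2 : ((s₁ : G₂) : G₂ ⧸ N₂) = φ₂.symm (φ₂ (1 : G₂ ⧸ N₂)⁻¹) := hs₁
      simp only [inv_one, map_one] at h2
      exact (QuotientGroup.eq_one_iff s₁).mp h2
    have hs₂' : ((s₂ : G₂) : G₂ ⧸ M₁) = φ₁ ((g : G₁ ⧸ N₁))⁻¹ := hs₂
    have hhs₂ : h * s₂ ∈ M₁ := by
      rw [← QuotientGroup.eq_one_iff, QuotientGroup.mk_mul, hs₂', map_inv, hgh]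
      simp
    have hφs' : φ₂ ↑(s₁ * s₂) = ((t : G₃ ⧸ M₂)) := hφs
    have hr : k₁ * t ∈ M₃ ⊔ M₂ := by
      rw [← SetLike.mem_coe, hP3, ← hSF3b]
      refine ⟨h * s₂ * s₁, ⟨h * s₂, hhs₂, s₁, hs₁', rfl⟩, ?_⟩
      have hs₂q : ((s₂ : G₂) : G₂ ⧸ N₂) = ((s₁ * s₂ : G₂) : G₂ ⧸ N₂) := by
        rw [QuotientGroup.mk_mul, (QuotientGroup.eq_one_iff s₁).mpr hs₁', one_mul]
      have hhq : ((h * s₂ * s₁ : G₂) : G₂ ⧸ N₂) = ((h : G₂) : G₂ ⧸ N₂) * ((s₂ : G₂) : G₂ ⧸ N₂) := by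
        rw [QuotientGroup.mk_mul, QuotientGroup.mk_mul,
          (QuotientGroup.eq_one_iff s₁).mpr hs₁', mul_one]
      rw [hhq, map_mul, hhk, hs₂q, hφs', ← QuotientGroup.mk_mul]
    rw [hC''] at hc''
    obtain ⟨q, hq, rfl⟩ := hc''
    have hq' : q ∈ M₃ ⊔ M₂ := by rw [← SetLike.mem_coe, hP3']; exact hq
    have hk2 : k₂' = q⁻¹ * k₀⁻¹ * t⁻¹ := by
      have h2 : t * (k₀ * q) = k₂'⁻¹ := heq
      rw [← inv_inv k₂', ← h2]; group
    have goal_eq : k₁⁻¹ * k₀ * k₂' = k₁⁻¹ * ((k₀ * q⁻¹ * k₀⁻¹) * (k₁ * t)⁻¹) * k₁⁻¹⁻¹ := by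
      rw [hk2]; group
    rw [goal_eq]
    exact (Subgroup.sup_normal M₃ M₂).conj_mem _
      (mul_mem ((Subgroup.sup_normal M₃ M₂).conj_mem _ (inv_mem hq') k₀) (inv_mem hr)) k₁⁻¹
  ext k
  constructor
  · rintro ⟨h, ⟨g, hgQ, hgh⟩, hhk⟩
    obtain ⟨k₂', hk₂'⟩ := QuotientGroup.mk_surjective (φ₃ ((g * g₀ : G₁) : G₁ ⧸ N₃))
    obtain ⟨k₃, hk₃⟩ := QuotientGroup.mk_surjective (φ₃ ((g₀ : G₁) : G₁ ⧸ N₃))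
    have key1 := key g h k k₂' hgh hhk hk₂'.symm
    have key0 := key 1 1 1 k₃ (by simp) (by simp) (by rw [one_mul]; exact hk₃.symm)
    have hp₀ : k₀ * k₃ ∈ M₃ ⊔ M₂ := by simpa using key0
    have hp0set : k₀ * k₃ ∈ fwd N₃ M₃ φ₃ ((N₁ : Set G₁) * (N₃ : Set G₁)) := by
      rw [hSF3c, ← hP3]; exact hp₀
    obtain ⟨q₀, hq₀P, hq₀⟩ := hp0set
    have hpinvset : (k⁻¹ * k₀ * k₂')⁻¹ ∈ fwd N₃ M₃ φ₃ ((N₁ : Set G₁) * (N₃ : Set G₁)) := by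
      rw [hSF3c, ← hP3]; exact inv_mem key1
    obtain ⟨q₁, hq₁P, hq₁⟩ := hpinvset
    have hq₀P' : q₀ ∈ N₁ ⊔ N₃ := by rw [← SetLike.mem_coe, hP1]; exact hq₀P
    refine ⟨(q₀ * g₀⁻¹) * g * (g₀ * q₁), ?_, ?_⟩
    · refine Set.mul_mem_mul (Set.mul_mem_mul ?_ hgQ) ?_
      · rw [hC, Set.mem_inv]
        refine ⟨q₀⁻¹, ?_, ?_⟩
        · rw [← hP1]; exact SetLike.mem_coe.mpr (inv_mem hq₀P')
        · show g₀ * q₀⁻¹ = (q₀ * g₀⁻¹)⁻¹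
          group
      · rw [hC]; exact ⟨q₁, hq₁P, rfl⟩
    · have harr : ((q₀ * g₀⁻¹) * g * (g₀ * q₁) : G₁) = q₀ * g₀⁻¹ * (g * g₀) * q₁ := by group
      rw [harr]
      calc φ₃ ↑(q₀ * g₀⁻¹ * (g * g₀) * q₁)
          = φ₃ ↑q₀ * (φ₃ ↑g₀)⁻¹ * φ₃ ↑(g * g₀) * φ₃ ↑q₁ := by
            rw [QuotientGroup.mk_mul, QuotientGroup.mk_mul, QuotientGroup.mk_mul,
              QuotientGroup.mk_inv, map_mul, map_mul, map_mul, map_inv]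
        _ = ((k₀ * k₃ : G₃) : G₃ ⧸ M₃) * (((k₃ : G₃) : G₃ ⧸ M₃))⁻¹ * ((k₂' : G₃) : G₃ ⧸ M₃) *
            (((k⁻¹ * k₀ * k₂')⁻¹ : G₃) : G₃ ⧸ M₃) := by
            rw [hq₀, ← hk₃, ← hk₂', hq₁]
        _ = ↑k := by
            simp only [QuotientGroup.mk_mul, QuotientGroup.mk_inv]
            group
  · rintro ⟨x, hx, hxk⟩
    obtain ⟨y, hy, c₂, hc₂, rfl⟩ := hx
    obtain ⟨z, hz, g'', hg'', rfl⟩ := hy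
    rw [hC] at hz hc₂
    rw [Set.mem_inv] at hz
    obtain ⟨p₁, hp₁, hz'⟩ := hz
    obtain ⟨p₂, hp₂, rfl⟩ := hc₂
    have hzeq : z = p₁⁻¹ * g₀⁻¹ := by
      have h1 : g₀ * p₁ = z⁻¹ := hz'
      rw [← inv_inv z, ← h1]; group
    subst hzeq
    have hp₁' : p₁ ∈ N₁ ⊔ N₃ := by rw [← SetLike.mem_coe, hP1]; exact hp₁
    have hgQ : g₀ * p₁⁻¹ * g₀⁻¹ * g'' ∈ Q := by
      have hconj := (Subgroup.sup_normal N₁ N₃).conj_mem _ (inv_mem hp₁') (g''⁻¹ * g₀)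
      have heq2 : g₀ * p₁⁻¹ * g₀⁻¹ * g'' = g'' * (g''⁻¹ * g₀ * p₁⁻¹ * (g''⁻¹ * g₀)⁻¹) := by
        group
      rw [heq2]
      refine hQ g'' hg'' ⟨_, ?_, rfl⟩
      rw [← hP1]
      simpa using hconj
    obtain ⟨h, hgh⟩ := QuotientGroup.mk_surjective
      (φ₁ ((g₀ * p₁⁻¹ * g₀⁻¹ * g'' : G₁) : G₁ ⧸ N₁))
    obtain ⟨k₁, hhk₁⟩ := QuotientGroup.mk_surjective (φ₂ ((h : G₂) : G₂ ⧸ N₂))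
    obtain ⟨k₂', hk₂'⟩ := QuotientGroup.mk_surjective
      (φ₃ ((g₀ * p₁⁻¹ * g₀⁻¹ * g'' * g₀ : G₁) : G₁ ⧸ N₃))
    obtain ⟨k₃, hk₃⟩ := QuotientGroup.mk_surjective (φ₃ ((g₀ : G₁) : G₁ ⧸ N₃))
    have key1 := key _ h k₁ k₂' hgh.symm hhk₁.symm hk₂'.symm
    have key0 := key 1 1 1 k₃ (by simp) (by simp) (by rw [one_mul]; exact hk₃.symm)
    have hp₀ : k₀ * k₃ ∈ M₃ ⊔ M₂ := by simpa using key0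
    obtain ⟨r, hrq⟩ := QuotientGroup.mk_surjective (φ₃ ((p₂ : G₁) : G₁ ⧸ N₃))
    have hrP : r ∈ M₃ ⊔ M₂ := by
      rw [← SetLike.mem_coe, hP3, ← hSF3c]
      exact ⟨p₂, hp₂, hrq.symm⟩
    have hxk' : φ₃ ↑(p₁⁻¹ * g₀⁻¹ * g'' * (g₀ * p₂)) = ((k : G₃) : G₃ ⧸ M₃) := hxk
    have harr : (p₁⁻¹ * g₀⁻¹ * g'' * (g₀ * p₂) : G₁)
        = g₀⁻¹ * (g₀ * p₁⁻¹ * g₀⁻¹ * g'' * g₀) * p₂ := by group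
    have hx2 : ((k : G₃) : G₃ ⧸ M₃) = ((k₃⁻¹ * k₂' * r : G₃) : G₃ ⧸ M₃) := by
      rw [← hxk', harr]
      calc φ₃ ↑(g₀⁻¹ * (g₀ * p₁⁻¹ * g₀⁻¹ * g'' * g₀) * p₂)
          = (φ₃ ↑g₀)⁻¹ * φ₃ ↑(g₀ * p₁⁻¹ * g₀⁻¹ * g'' * g₀) * φ₃ ↑p₂ := by
            rw [QuotientGroup.mk_mul, QuotientGroup.mk_mul, QuotientGroup.mk_inv,
              map_mul, map_mul, map_inv]
        _ = (((k₃ : G₃) : G₃ ⧸ M₃))⁻¹ * ((k₂' : G₃) : G₃ ⧸ M₃) * ((r : G₃) : G₃ ⧸ M₃) := by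
            rw [← hk₂', ← hk₃, ← hrq]
        _ = ((k₃⁻¹ * k₂' * r : G₃) : G₃ ⧸ M₃) := by
            rw [QuotientGroup.mk_mul, QuotientGroup.mk_mul, QuotientGroup.mk_inv]
    have hm : (k₃⁻¹ * k₂' * r)⁻¹ * k ∈ M₃ := QuotientGroup.eq.mp hx2.symm
    have hkk : k₁⁻¹ * k ∈ M₃ ⊔ M₂ := by
      have hdec : k₁⁻¹ * k = (k₁⁻¹ * (k₀ * k₃)⁻¹ * k₁⁻¹⁻¹) *
          ((k₁⁻¹ * k₀ * k₂') * (r * ((k₃⁻¹ * k₂' * r)⁻¹ * k))) := by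
        group
      rw [hdec]
      exact mul_mem ((Subgroup.sup_normal M₃ M₂).conj_mem _ (inv_mem hp₀) k₁⁻¹)
        (mul_mem key1 (mul_mem hrP (Subgroup.mem_sup_left hm)))
    have hkkset : k₁⁻¹ * k ∈ (M₃ : Set G₃) * (M₂ : Set G₃) := by
      rw [← hP3]; exact hkk
    obtain ⟨m₃', hm₃', m₂', hm₂', hprod⟩ := hkkset
    have hprod' : m₃' * m₂' = k₁⁻¹ * k := hprod
    have hm₃set : m₃' ∈ fwd N₂ M₂ φ₂ ((M₁ : Set G₂) * (N₂ : Set G₂)) := by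
      rw [hSF3b]; exact ⟨m₃', hm₃', 1, Subgroup.one_mem M₂, mul_one m₃'⟩
    obtain ⟨s, hsP, hφs⟩ := hm₃set
    have hsset : s ∈ fwd N₁ M₁ φ₁ ((N₁ : Set G₁) * (N₃ : Set G₁)) := by
      rw [hSF3a]; exact hsP
    obtain ⟨t, htP, hφt⟩ := hsset
    refine ⟨h * s, ⟨(g₀ * p₁⁻¹ * g₀⁻¹ * g'') * t, ?_, ?_⟩, ?_⟩
    · exact hQ _ hgQ ⟨t, htP, rfl⟩
    · rw [QuotientGroup.mk_mul, map_mul, ← hgh, hφt, QuotientGroup.mk_mul]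
    · rw [QuotientGroup.mk_mul, map_mul, ← hhk₁, hφs, ← QuotientGroup.mk_mul]
      apply QuotientGroup.eq.mpr
      have hfin : (k₁ * m₃')⁻¹ * k = m₂' := by
        rw [mul_inv_rev, mul_assoc, ← hprod']; group
      rw [hfin]; exact hm₂'


end CosetRA
end

section
/- Assume the pre-semi-frame conditions (SF3): φ₁[N₁·N₃] = M₁·N₂, φ₂[M₁·N₂] = M₃·M₂, and φ₃[N₁·N₃] = M₃·M₂, and let C ⊆ G₁ be a left coset of N₁·N₃ satisfying the semi-frame condition (SF4): for every Q ⊆ G₁ that is a union of left cosets of N₁·N₃, φ₂[φ₁[Q]] = φ₃[C⁻¹·Q·C]. Then the following are equivalent: (i) R¹_a ⊗_C R²_b = R¹_a ∘ R²_b for some a ∈ G₁⧸N₁ and b ∈ G₂⧸N₂; (ii) R¹_a ⊗_C R²_b = R¹_a ∘ R²_b for all a ∈ G₁⧸N₁ and b ∈ G₂⧸N₂; (iii) C = N₁·N₃ as subsets of G₁ (i.e. C is the identity coset). -/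
open scoped Pointwise

namespace CosetRA

variable {G G' : Type*}

section Aux

variable [Group G] [Group G']

lemma mk_out {N : Subgroup G} (q : G ⧸ N) : ((q.out : G) : G ⧸ N) = q := Quotient.out_eq' q

lemma cosetOf_eq {N : Subgroup G} {x : G} {a : G ⧸ N} (h : (x : G ⧸ N) = a) :
    cosetOf N a = x • (N : Set G) := by
  subst h
  ext g
  constructor
  · intro hg
    rw [mem_leftCoset_iff]
    exact QuotientGroup.eq.mp (hg.symm : (x : G ⧸ N) = g)
  · intro hg
    rw [mem_leftCoset_iff] at hg
    exact (QuotientGroup.eq.mpr hg).symm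

lemma coe_mul_self (P : Subgroup G) : (P : Set G) * (P : Set G) = (P : Set G) := by
  ext z
  simp only [Set.mem_mul, SetLike.mem_coe]
  constructor
  · rintro ⟨a, ha, b, hb, rfl⟩
    exact P.mul_mem ha hb
  · intro hz
    exact ⟨z, hz, 1, P.one_mem, mul_one z⟩

lemma smul_coe_mul_smul_coe (H K : Subgroup G) [hH : H.Normal] (x y : G) :
    (x • (H : Set G)) * (y • (K : Set G)) = (x * y) • ((H : Set G) * (K : Set G)) := by
  ext z
  simp only [Set.mem_mul, Set.mem_smul_set, SetLike.mem_coe, smul_eq_mul]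
  constructor
  · rintro ⟨u, ⟨h, hh, rfl⟩, v, ⟨k, hk, rfl⟩, rfl⟩
    refine ⟨y⁻¹ * h * y * k, ⟨y⁻¹ * h * y, by simpa using hH.conj_mem h hh y⁻¹, k, hk, rfl⟩, by group⟩
  · rintro ⟨w, ⟨h, hh, k, hk, rfl⟩, rfl⟩
    exact ⟨x * (y * h * y⁻¹), ⟨y * h * y⁻¹, hH.conj_mem h hh y, rfl⟩, y * k, ⟨k, hk, rfl⟩, by group⟩

lemma smul_mul_smul_coe (P : Subgroup G) [P.Normal] (x y : G) :
    (x • (P : Set G)) * (y • (P : Set G)) = (x * y) • (P : Set G) := by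
  rw [smul_coe_mul_smul_coe, coe_mul_self]

lemma smul_coe_inv (P : Subgroup G) [hP : P.Normal] (x : G) :
    (x • (P : Set G))⁻¹ = x⁻¹ • (P : Set G) := by
  ext z
  rw [Set.mem_inv, mem_leftCoset_iff, mem_leftCoset_iff, inv_inv]
  constructor
  · intro h
    have h1 : (z * x)⁻¹ ∈ P := by simpa [mul_inv_rev] using h
    exact hP.mem_comm_iff.mp (by simpa using P.inv_mem h1)
  · intro h
    have h1 : z * x ∈ P := hP.mem_comm_iff.mp h
    simpa [mul_inv_rev] using P.inv_mem h1

lemma fwd_smul {N : Subgroup G} {M : Subgroup G'} [N.Normal] [M.Normal]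
    (φ : G ⧸ N ≃* G' ⧸ M) {x : G} {y : G'} (hxy : φ (x : G ⧸ N) = (y : G' ⧸ M)) (S : Set G) :
    fwd N M φ (x • S) = y • fwd N M φ S := by
  ext h
  simp only [fwd, Set.mem_setOf_eq, Set.mem_smul_set, smul_eq_mul]
  constructor
  · rintro ⟨g, ⟨g', hg', rfl⟩, hg⟩
    refine ⟨y⁻¹ * h, ⟨g', hg', ?_⟩, by group⟩
    rw [QuotientGroup.mk_mul, map_mul, hxy] at hg
    show φ (g' : G ⧸ N) = ((y : G' ⧸ M))⁻¹ * (h : G' ⧸ M)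
    rw [eq_inv_mul_iff_mul_eq, hg]
  · rintro ⟨h', ⟨g, hg, hφ⟩, rfl⟩
    refine ⟨x * g, ⟨g, hg, rfl⟩, ?_⟩
    rw [QuotientGroup.mk_mul, map_mul, hxy, hφ]
    rfl

lemma bwd_smul {N : Subgroup G} {M : Subgroup G'} [N.Normal] [M.Normal]
    (φ : G ⧸ N ≃* G' ⧸ M) {x : G} {y : G'} (hxy : φ (x : G ⧸ N) = (y : G' ⧸ M)) (S' : Set G') :
    bwd N M φ (y • S') = x • bwd N M φ S' := by
  ext g
  simp only [bwd, Set.mem_setOf_eq, Set.mem_smul_set, smul_eq_mul]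
  constructor
  · rintro ⟨h, ⟨h', hh', rfl⟩, hg⟩
    refine ⟨x⁻¹ * g, ⟨h', hh', ?_⟩, by group⟩
    have hsplit : φ ((x⁻¹ * g : G) : G ⧸ N) = (φ ((x : G) : G ⧸ N))⁻¹ * φ ((g : G) : G ⧸ N) := by
      rw [QuotientGroup.mk_mul, map_mul, QuotientGroup.mk_inv, map_inv]
    rw [hsplit, hxy, hg, QuotientGroup.mk_mul]
    group
  · rintro ⟨g', ⟨h', hh', hg'⟩, rfl⟩
    refine ⟨y * h', ⟨h', hh', rfl⟩, ?_⟩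
    rw [QuotientGroup.mk_mul, map_mul, hxy, hg']
    rfl

lemma bwd_coe_eq {N : Subgroup G} {M : Subgroup G'} [N.Normal] [M.Normal]
    (φ : G ⧸ N ≃* G' ⧸ M) {P : Subgroup G} (hNP : N ≤ P) {S' : Set G'}
    (hfwd : fwd N M φ (P : Set G) = S') : bwd N M φ S' = (P : Set G) := by
  subst hfwd
  ext g
  simp only [bwd, fwd, Set.mem_setOf_eq, SetLike.mem_coe]
  constructor
  · rintro ⟨h, ⟨p, hp, hp2⟩, hg⟩
    have he : (p : G ⧸ N) = (g : G ⧸ N) := φ.injective (by rw [hp2, hg])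
    have hmem : p⁻¹ * g ∈ N := QuotientGroup.eq.mp he
    have := P.mul_mem hp (hNP hmem)
    simpa using this
  · intro hg
    exact ⟨(φ (g : G ⧸ N)).out, ⟨g, hg, (mk_out _).symm⟩, (mk_out _).symm⟩

lemma smul_eq_of_fwd_eq {N : Subgroup G} {M : Subgroup G'} [N.Normal] [M.Normal]
    (φ : G ⧸ N ≃* G' ⧸ M) {P : Subgroup G} (hNP : N ≤ P) {x x' : G}
    (h : fwd N M φ (x • (P : Set G)) = fwd N M φ (x' • (P : Set G))) :
    x • (P : Set G) = x' • (P : Set G) := by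
  have hxmem : x ∈ x • (P : Set G) := by
    rw [mem_leftCoset_iff]
    simpa using P.one_mem
  have hfx : (φ (x : G ⧸ N)).out ∈ fwd N M φ (x • (P : Set G)) :=
    ⟨x, hxmem, (mk_out _).symm⟩
  rw [h] at hfx
  obtain ⟨g, hg, hφg⟩ := hfx
  have he : (g : G ⧸ N) = (x : G ⧸ N) := φ.injective (by rw [hφg, mk_out])
  have h1 : g⁻¹ * x ∈ P := hNP (QuotientGroup.eq.mp he)
  rw [mem_leftCoset_iff] at hg
  have h2 : x'⁻¹ * x ∈ P := by
    have := P.mul_mem hg h1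
    simpa [mul_assoc] using this
  rw [leftCoset_eq_iff]
  simpa [mul_inv_rev] using P.inv_mem h2

lemma isUnionOfCosets_smul' (P : Subgroup G) (x : G) :
    ∀ g ∈ x • (P : Set G), g • (P : Set G) ⊆ x • (P : Set G) := by
  rintro g hg u hu
  rw [mem_leftCoset_iff] at hg ⊢
  obtain ⟨p, hp, rfl⟩ := hu
  simpa [smul_eq_mul, mul_assoc] using P.mul_mem hg hp

end Aux

lemma unionAtoms_smul_coe {G₁ G₃ : Type*} [Group G₁] [Group G₃] (N₃ : Subgroup G₁)
    (M₃ : Subgroup G₃) [N₃.Normal] [M₃.Normal] (φ₃ : G₁ ⧸ N₃ ≃* G₃ ⧸ M₃)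
    {P : Subgroup G₁} (hNP : N₃ ≤ P) (z : G₁) :
    unionAtoms N₃ M₃ φ₃ (z • (P : Set G₁)) =
      {p : G₁ × G₃ | p.2 ∈ fwd N₃ M₃ φ₃ ((p.1 * z) • (P : Set G₁))} := by
  ext ⟨g, k⟩
  simp only [unionAtoms, atom, Set.mem_iUnion, Set.mem_setOf_eq, exists_prop]
  constructor
  · rintro ⟨c, hc, hk⟩
    have hc0 : c.out ∈ z • (P : Set G₁) := hc (mk_out c)
    refine ⟨g * c.out, ?_, ?_⟩
    · rw [mem_leftCoset_iff] at hc0 ⊢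
      simpa [mul_inv_rev, mul_assoc] using hc0
    · rw [QuotientGroup.mk_mul, map_mul, mk_out]
      exact hk.symm
  · rintro ⟨w, hw, hφw⟩
    refine ⟨((g⁻¹ * w : G₁) : G₁ ⧸ N₃), ?_, ?_⟩
    · intro u hu
      have h1 : (g⁻¹ * w)⁻¹ * u ∈ N₃ :=
        QuotientGroup.eq.mp ((hu : (u : G₁ ⧸ N₃) = ((g⁻¹ * w : G₁) : G₁ ⧸ N₃)).symm)
      rw [mem_leftCoset_iff] at hw ⊢
      have h2 : z⁻¹ * (g⁻¹ * w) ∈ P := by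
        simpa [mul_inv_rev, mul_assoc] using hw
      have h3 := P.mul_mem h2 (hNP h1)
      simpa [mul_inv_rev, mul_assoc] using h3
    · rw [← map_mul, ← QuotientGroup.mk_mul, mul_inv_cancel_left]
      exact hφw.symm

lemma rcomp_atom_atom {G₁ G₂ G₃ : Type*} [Group G₁] [Group G₂] [Group G₃]
    (N₁ : Subgroup G₁) (M₁ : Subgroup G₂) (N₂ : Subgroup G₂) (M₂ : Subgroup G₃)
    [N₁.Normal] [M₁.Normal] [N₂.Normal] [M₂.Normal]
    (φ₁ : G₁ ⧸ N₁ ≃* G₂ ⧸ M₁) (φ₂ : G₂ ⧸ N₂ ≃* G₃ ⧸ M₂) (a : G₁ ⧸ N₁) (b : G₂ ⧸ N₂) :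
    rcomp (atom N₁ M₁ φ₁ a) (atom N₂ M₂ φ₂ b) =
      {p : G₁ × G₃ | p.2 ∈ fwd N₂ M₂ φ₂
        (cosetOf M₁ (φ₁ ((p.1 : G₁) : G₁ ⧸ N₁) * φ₁ a) * cosetOf N₂ b)} := by
  ext ⟨g, k⟩
  simp only [rcomp, atom, fwd, Set.mem_setOf_eq]
  constructor
  · rintro ⟨h, h1, h2⟩
    refine ⟨h * b.out, ⟨h, h1, b.out, mk_out b, rfl⟩, ?_⟩
    rw [QuotientGroup.mk_mul, map_mul, mk_out]
    exact h2.symm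
  · rintro ⟨x, ⟨h, hh, b', hb', rfl⟩, hφ⟩
    refine ⟨h, hh, ?_⟩
    rw [← hφ, QuotientGroup.mk_mul, map_mul, hb']

/-- The coset-shifted relative product agrees with relational composition
exactly when the shifting coset is the identity coset. -/
theorem otimes_eq_comp_iff {G₁ G₂ G₃ : Type*} [Group G₁] [Group G₂] [Group G₃]
    (N₁ : Subgroup G₁) (M₁ : Subgroup G₂) (N₂ : Subgroup G₂) (M₂ : Subgroup G₃)
    (N₃ : Subgroup G₁) (M₃ : Subgroup G₃)
    [N₁.Normal] [M₁.Normal] [N₂.Normal] [M₂.Normal] [N₃.Normal] [M₃.Normal]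
    (φ₁ : G₁ ⧸ N₁ ≃* G₂ ⧸ M₁) (φ₂ : G₂ ⧸ N₂ ≃* G₃ ⧸ M₂) (φ₃ : G₁ ⧸ N₃ ≃* G₃ ⧸ M₃)
    (hSF3a : fwd N₁ M₁ φ₁ ((N₁ : Set G₁) * (N₃ : Set G₁)) = (M₁ : Set G₂) * (N₂ : Set G₂))
    (hSF3b : fwd N₂ M₂ φ₂ ((M₁ : Set G₂) * (N₂ : Set G₂)) = (M₃ : Set G₃) * (M₂ : Set G₃))
    (hSF3c : fwd N₃ M₃ φ₃ ((N₁ : Set G₁) * (N₃ : Set G₁)) = (M₃ : Set G₃) * (M₂ : Set G₃))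
    (C : Set G₁) (hC : IsLeftCosetSet ((N₁ : Set G₁) * (N₃ : Set G₁)) C)
    (hSF4 : ∀ Q : Set G₁, IsUnionOfCosets ((N₁ : Set G₁) * (N₃ : Set G₁)) Q →
      fwd N₂ M₂ φ₂ (fwd N₁ M₁ φ₁ Q) = fwd N₃ M₃ φ₃ (C⁻¹ * Q * C)) :
    List.TFAE
      [ (∃ (a : G₁ ⧸ N₁) (b : G₂ ⧸ N₂),
          unionAtoms N₃ M₃ φ₃ (bwd N₁ M₁ φ₁ (cosetOf M₁ (φ₁ a) * cosetOf N₂ b) * C) =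
            rcomp (atom N₁ M₁ φ₁ a) (atom N₂ M₂ φ₂ b)),
        (∀ (a : G₁ ⧸ N₁) (b : G₂ ⧸ N₂),
          unionAtoms N₃ M₃ φ₃ (bwd N₁ M₁ φ₁ (cosetOf M₁ (φ₁ a) * cosetOf N₂ b) * C) =
            rcomp (atom N₁ M₁ φ₁ a) (atom N₂ M₂ φ₂ b)),
        C = (N₁ : Set G₁) * (N₃ : Set G₁) ] := by
  classical
  have hP₁ : ((N₁ : Set G₁) * (N₃ : Set G₁)) = ((N₁ ⊔ N₃ : Subgroup G₁) : Set G₁) :=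
    (Subgroup.normal_mul N₁ N₃).symm
  have hP₂ : ((M₁ : Set G₂) * (N₂ : Set G₂)) = ((M₁ ⊔ N₂ : Subgroup G₂) : Set G₂) :=
    (Subgroup.normal_mul M₁ N₂).symm
  have hP₃ : ((M₃ : Set G₃) * (M₂ : Set G₃)) = ((M₃ ⊔ M₂ : Subgroup G₃) : Set G₃) :=
    (Subgroup.normal_mul M₃ M₂).symm
  rw [hP₁, hP₂] at hSF3a
  rw [hP₁, hP₃] at hSF3c
  rw [hP₁] at hC
  rw [hP₁] at hSF4
  have main : ∀ g₀ : G₁, C = g₀ • ((N₁ ⊔ N₃ : Subgroup G₁) : Set G₁) →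
      ∀ (a : G₁ ⧸ N₁) (b : G₂ ⧸ N₂), ∃ s₀ : G₁,
      ((unionAtoms N₃ M₃ φ₃ (bwd N₁ M₁ φ₁ (cosetOf M₁ (φ₁ a) * cosetOf N₂ b) * C) =
          rcomp (atom N₁ M₁ φ₁ a) (atom N₂ M₂ φ₂ b)) ↔
        ∀ g : G₁, fwd N₃ M₃ φ₃ ((g * (s₀ * g₀)) • ((N₁ ⊔ N₃ : Subgroup G₁) : Set G₁)) =
          fwd N₃ M₃ φ₃ ((g₀⁻¹ * (g * s₀) * g₀) • ((N₁ ⊔ N₃ : Subgroup G₁) : Set G₁))) := by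
    intro g₀ hCg a b
    obtain ⟨b₀, hb₀⟩ : ∃ b₀ : G₂, ((b₀ : G₂) : G₂ ⧸ N₂) = b := ⟨b.out, mk_out b⟩
    obtain ⟨α₀, hα₀⟩ : ∃ α₀ : G₂, ((α₀ : G₂) : G₂ ⧸ M₁) = φ₁ a := ⟨(φ₁ a).out, mk_out _⟩
    obtain ⟨s₀, hs₀⟩ : ∃ s₀ : G₁, φ₁ ((s₀ : G₁) : G₁ ⧸ N₁) = ((α₀ * b₀ : G₂) : G₂ ⧸ M₁) :=
      ⟨(φ₁.symm ((α₀ * b₀ : G₂) : G₂ ⧸ M₁)).out, by rw [mk_out, MulEquiv.apply_symm_apply]⟩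
    refine ⟨s₀, ?_⟩
    have h1 : cosetOf M₁ (φ₁ a) * cosetOf N₂ b = (α₀ * b₀) • ((M₁ ⊔ N₂ : Subgroup G₂) : Set G₂) := by
      rw [cosetOf_eq hα₀, cosetOf_eq hb₀, smul_coe_mul_smul_coe, hP₂]
    have hbwdP : bwd N₁ M₁ φ₁ ((M₁ ⊔ N₂ : Subgroup G₂) : Set G₂) =
        ((N₁ ⊔ N₃ : Subgroup G₁) : Set G₁) := bwd_coe_eq φ₁ le_sup_left hSF3a
    have h2 : bwd N₁ M₁ φ₁ ((α₀ * b₀) • ((M₁ ⊔ N₂ : Subgroup G₂) : Set G₂)) =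
        s₀ • ((N₁ ⊔ N₃ : Subgroup G₁) : Set G₁) := by
      rw [bwd_smul φ₁ hs₀, hbwdP]
    have h3 : (s₀ • ((N₁ ⊔ N₃ : Subgroup G₁) : Set G₁)) * C =
        (s₀ * g₀) • ((N₁ ⊔ N₃ : Subgroup G₁) : Set G₁) := by
      rw [hCg, smul_mul_smul_coe]
    have hL : unionAtoms N₃ M₃ φ₃ (bwd N₁ M₁ φ₁ (cosetOf M₁ (φ₁ a) * cosetOf N₂ b) * C) =
        {p : G₁ × G₃ | p.2 ∈ fwd N₃ M₃ φ₃ ((p.1 * (s₀ * g₀)) • ((N₁ ⊔ N₃ : Subgroup G₁) : Set G₁))} := by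
      rw [h1, h2, h3, unionAtoms_smul_coe N₃ M₃ φ₃ le_sup_right]
    have hR : rcomp (atom N₁ M₁ φ₁ a) (atom N₂ M₂ φ₂ b) =
        {p : G₁ × G₃ | p.2 ∈ fwd N₃ M₃ φ₃
          ((g₀⁻¹ * (p.1 * s₀) * g₀) • ((N₁ ⊔ N₃ : Subgroup G₁) : Set G₁))} := by
      rw [rcomp_atom_atom]
      ext ⟨g, k⟩
      simp only [Set.mem_setOf_eq]
      have hc : cosetOf M₁ (φ₁ ((g : G₁) : G₁ ⧸ N₁) * φ₁ a) * cosetOf N₂ b =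
          fwd N₁ M₁ φ₁ ((g * s₀) • ((N₁ ⊔ N₃ : Subgroup G₁) : Set G₁)) := by
        obtain ⟨h', hh'⟩ : ∃ h' : G₂, ((h' : G₂) : G₂ ⧸ M₁) = φ₁ ((g : G₁) : G₁ ⧸ N₁) * φ₁ a :=
          ⟨_, mk_out _⟩
        have hy : φ₁ ((g * s₀ : G₁) : G₁ ⧸ N₁) = ((h' * b₀ : G₂) : G₂ ⧸ M₁) := by
          rw [QuotientGroup.mk_mul, map_mul, hs₀, QuotientGroup.mk_mul, hα₀,
            QuotientGroup.mk_mul, hh', mul_assoc]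
        rw [cosetOf_eq hh', cosetOf_eq hb₀, smul_coe_mul_smul_coe, hP₂, fwd_smul φ₁ hy, hSF3a]
      rw [hc]
      have hQ := hSF4 ((g * s₀) • ((N₁ ⊔ N₃ : Subgroup G₁) : Set G₁))
        (isUnionOfCosets_smul' (N₁ ⊔ N₃) (g * s₀))
      rw [hQ, hCg, smul_coe_inv, smul_mul_smul_coe, smul_mul_smul_coe]
    rw [hL, hR]
    constructor
    · intro h g
      ext k
      exact Set.ext_iff.mp h (g, k)
    · intro h
      ext p
      simp only [Set.mem_setOf_eq, h p.1]
  tfae_have 2 → 1 := by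
      intro h
      exact ⟨1, 1, h 1 1⟩
  tfae_have 3 → 2 := by
      intro h3 a b
      obtain ⟨s₀, hiff⟩ := main 1 (by rw [h3, hP₁, one_smul]) a b
      apply hiff.mpr
      intro g
      have he : g * (s₀ * (1 : G₁)) = (1 : G₁)⁻¹ * (g * s₀) * 1 := by group
      rw [he]
  tfae_have 1 → 3 := by
      rintro ⟨a, b, hab⟩
      obtain ⟨g₀, hg₀⟩ := hC
      obtain ⟨s₀, hiff⟩ := main g₀ hg₀ a b
      have h1 := hiff.mp hab 1
      have h2 := smul_eq_of_fwd_eq φ₃ (le_sup_right : N₃ ≤ N₁ ⊔ N₃) h1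
      rw [leftCoset_eq_iff] at h2
      have h3 : (s₀ * g₀)⁻¹ * g₀⁻¹ * (s₀ * g₀) ∈ N₁ ⊔ N₃ := by
        have he : ((1 : G₁) * (s₀ * g₀))⁻¹ * (g₀⁻¹ * ((1 : G₁) * s₀) * g₀) =
            (s₀ * g₀)⁻¹ * g₀⁻¹ * (s₀ * g₀) := by group
        rwa [he] at h2
      have h4 : g₀⁻¹ ∈ N₁ ⊔ N₃ := by
        have hconj := (inferInstance : (N₁ ⊔ N₃ : Subgroup G₁).Normal).conj_mem _ h3 (s₀ * g₀)
        have he : (s₀ * g₀) * ((s₀ * g₀)⁻¹ * g₀⁻¹ * (s₀ * g₀)) * (s₀ * g₀)⁻¹ = g₀⁻¹ := by group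
        rwa [he] at hconj
      rw [hP₁, hg₀]
      conv_rhs => rw [← one_smul G₁ (((N₁ ⊔ N₃ : Subgroup G₁) : Set G₁))]
      rw [leftCoset_eq_iff]
      simpa using h4
  tfae_finish

end CosetRA
end
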